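/- arXiv:2004.14866 — 4 statements merged into one kernel-verified Lean document; each statement's English description precedes it below -/
import Mathlib

section
/- Let ξ, η ≥ 1, and suppose (1/ξ)·A ⪯ G ⪯ η·A. Then for any vector u ∈ ℝ^n and any τ ∈ [0,1], the updated matrix satisfies (1/ξ)·A ⪯ Broyd_τ(A, G, u) ⪯ η·A. In particular, Broyd_τ(A, G, u) is positive definite. -/
open Matrix Finset

section BroydHelpers
variable {n : ℕ}

lemma vecMulVec_mulVec' (u v y : Fin n → ℝ) :
    (vecMulVec u v) *ᵥ y = (v ⬝ᵥ y) • u := by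
  ext i
  simp only [vecMulVec_apply, mulVec, dotProduct, Pi.smul_apply, smul_eq_mul, Finset.sum_mul,
    Finset.mul_sum]
  exact Finset.sum_congr rfl fun j _ => by ring

lemma quad_sandwich (A B : Matrix (Fin n) (Fin n) ℝ) (u x : Fin n → ℝ) :
    x ⬝ᵥ (A * vecMulVec u u * B) *ᵥ x = (x ⬝ᵥ A *ᵥ u) * (u ⬝ᵥ B *ᵥ x) := by
  rw [← Matrix.mulVec_mulVec, ← Matrix.mulVec_mulVec, vecMulVec_mulVec', Matrix.mulVec_smul,
    dotProduct_smul, smul_eq_mul, mul_comm]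

lemma flip_symm {M : Matrix (Fin n) (Fin n) ℝ} (hM : Mᵀ = M) (u x : Fin n → ℝ) :
    u ⬝ᵥ M *ᵥ x = x ⬝ᵥ M *ᵥ u := by
  rw [Matrix.dotProduct_mulVec, ← hM, Matrix.vecMul_transpose, dotProduct_comm, hM]

lemma dot_shift {A : Matrix (Fin n) (Fin n) ℝ} (hA : Aᵀ = A) (u w : Fin n → ℝ) :
    u ⬝ᵥ A *ᵥ w = (A *ᵥ u) ⬝ᵥ w := by
  rw [Matrix.dotProduct_mulVec, ← Matrix.vecMul_transpose, hA]

lemma expand_quad {M : Matrix (Fin n) (Fin n) ℝ} (hM : Mᵀ = M) (u x : Fin n → ℝ) (c : ℝ) :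
    (x - c • u) ⬝ᵥ M *ᵥ (x - c • u) =
      x ⬝ᵥ M *ᵥ x - 2 * c * (x ⬝ᵥ M *ᵥ u) + c ^ 2 * (u ⬝ᵥ M *ᵥ u) := by
  rw [Matrix.mulVec_sub, Matrix.mulVec_smul, sub_dotProduct, dotProduct_sub, dotProduct_sub,
    smul_dotProduct, dotProduct_smul, dotProduct_smul, flip_symm hM u x]
  simp only [smul_dotProduct, smul_eq_mul]
  ring

lemma isHermitian_of_symm' {M : Matrix (Fin n) (Fin n) ℝ} (h : Mᵀ = M) : M.IsHermitian := by
  rw [Matrix.IsHermitian, conjTranspose_eq_transpose_of_trivial, h]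

lemma vecMulVec_self_transpose (u : Fin n → ℝ) : (vecMulVec u u)ᵀ = vecMulVec u u := by
  ext i j
  simp [vecMulVec_apply, mul_comm]

lemma dfp_scalar (μ η a g p q b c yg ya : ℝ) (ha : 0 < a)
    (hμ0 : 0 < μ) (hμ1 : μ ≤ 1) (hη : 1 ≤ η)
    (eG : yg = q - 2*(b/a)*c + (b/a)^2*g)
    (eA : ya = p - 2*(b/a)*b + (b/a)^2*a)
    (hl : μ * ya ≤ yg) (hu : yg ≤ η * ya) :
    μ * p ≤ q - a⁻¹*(b*c + c*b) + ((g/a+1)/a)*(b*b) ∧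
      q - a⁻¹*(b*c + c*b) + ((g/a+1)/a)*(b*b) ≤ η * p := by
  have ha' : a ≠ 0 := ha.ne'
  have e1 : q - a⁻¹*(b*c + c*b) + ((g/a+1)/a)*(b*b) = yg + b^2/a := by
    rw [eG]; field_simp; ring
  have e2 : ya = p - b^2/a := by rw [eA]; field_simp; ring
  have hb2a : 0 ≤ b^2/a := div_nonneg (sq_nonneg b) ha.le
  rw [e2] at hl hu
  constructor
  · rw [e1]
    nlinarith [mul_nonneg (by linarith : (0:ℝ) ≤ 1 - μ) hb2a]
  · rw [e1]
    nlinarith [mul_nonneg (by linarith : (0:ℝ) ≤ η - 1) hb2a]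

lemma bfgs_upper_scalar (η a g p q b c yg ya : ℝ) (ha : 0 < a) (hg : 0 < g) (hη : 1 ≤ η)
    (eG : yg = q - 2*(b/a)*c + (b/a)^2*g)
    (eA : ya = p - 2*(b/a)*b + (b/a)^2*a)
    (hu : yg ≤ η * ya) :
    q - g⁻¹*(c*c) + a⁻¹*(b*b) ≤ η * p := by
  have ha' : a ≠ 0 := ha.ne'
  have hg' : g ≠ 0 := hg.ne'
  have e2 : ya = p - b^2/a := by rw [eA]; field_simp; ring
  have e3 : yg - (q - c^2/g) = ((b/a)*g - c)^2/g := by rw [eG]; field_simp; ring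
  have hb2a : 0 ≤ b^2/a := div_nonneg (sq_nonneg b) ha.le
  have hS : 0 ≤ ((b/a)*g - c)^2/g := div_nonneg (sq_nonneg _) hg.le
  have egoal : q - g⁻¹*(c*c) + a⁻¹*(b*b) = (q - c^2/g) + b^2/a := by field_simp
  rw [e2] at hu
  rw [egoal]
  nlinarith [mul_nonneg (by linarith : (0:ℝ) ≤ η - 1) hb2a]

lemma bfgs_lower_scalar (μ a g p q b c zg za : ℝ) (ha : 0 < a) (hg : 0 < g)
    (hμ0 : 0 < μ) (hμ1 : μ ≤ 1)
    (eG : zg = q - 2*(c/g)*c + (c/g)^2*g)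
    (eA : za = p - 2*(c/g)*b + (c/g)^2*a)
    (hl : μ * za ≤ zg) :
    μ * p ≤ q - g⁻¹*(c*c) + a⁻¹*(b*b) := by
  have ha' : a ≠ 0 := ha.ne'
  have hg' : g ≠ 0 := hg.ne'
  have e4 : zg = q - c^2/g := by rw [eG]; field_simp; ring
  have e5 : za = p - b^2/a + ((c/g)*a - b)^2/a := by rw [eA]; field_simp; ring
  have hb2a : 0 ≤ b^2/a := div_nonneg (sq_nonneg b) ha.le
  have hT : 0 ≤ ((c/g)*a - b)^2/a := div_nonneg (sq_nonneg _) ha.le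
  have egoal : q - g⁻¹*(c*c) + a⁻¹*(b*b) = (q - c^2/g) + b^2/a := by field_simp
  rw [e4, e5] at hl
  rw [egoal]
  nlinarith [mul_nonneg hμ0.le hT, mul_nonneg (by linarith : (0:ℝ) ≤ 1 - μ) hb2a]

end BroydHelpers

/-- The Broyden family update of a Hessian approximation `G` with respect to
the target matrix `A` along direction `u`, parameterized by `τ`. -/
noncomputable def broyd {n : ℕ} (τ : ℝ) (A G : Matrix (Fin n) (Fin n) ℝ) (u : Fin n → ℝ) :
    Matrix (Fin n) (Fin n) ℝ :=
  if u = 0 then G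
  else
    let aUU : ℝ := u ⬝ᵥ A.mulVec u
    let gUU : ℝ := u ⬝ᵥ G.mulVec u
    let agaUU : ℝ := u ⬝ᵥ (A * G⁻¹ * A).mulVec u
    let ρ : ℝ := gUU / aUU
    let φ : ℝ := τ * (aUU / agaUU) / (τ * (aUU / agaUU) + (1 - τ) * ρ)
    φ • (G - aUU⁻¹ • (A * vecMulVec u u * G + G * vecMulVec u u * A)
          + ((ρ + 1) / aUU) • (A * vecMulVec u u * A)) +
    (1 - φ) • (G - gUU⁻¹ • (G * vecMulVec u u * G) + aUU⁻¹ • (A * vecMulVec u u * A))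

/-- `psdLE P Q` (i.e. `P ⪯ Q`) : the matrix `Q - P` is positive semidefinite. -/
def psdLE {n : ℕ} (P Q : Matrix (Fin n) (Fin n) ℝ) : Prop := (Q - P).PosSemidef

/-- The closeness measure ν(A, G, u). -/
noncomputable def nuMeas {n : ℕ} (A G : Matrix (Fin n) (Fin n) ℝ) (u : Fin n → ℝ) : ℝ :=
  Real.sqrt ((u ⬝ᵥ ((G - A) * G⁻¹ * (G - A)).mulVec u) / (u ⬝ᵥ A.mulVec u))

/-- The log-det barrier V(A, G) = ln det (A⁻¹ G). -/
noncomputable def logDetBarrier {n : ℕ} (A G : Matrix (Fin n) (Fin n) ℝ) : ℝ :=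
  Real.log (A⁻¹ * G).det

/-- The augmented log-det barrier ψ(G, A) = ln det (A⁻¹ G) - tr (G⁻¹ (G - A)). -/
noncomputable def psiBarrier {n : ℕ} (G A : Matrix (Fin n) (Fin n) ℝ) : ℝ :=
  Real.log (A⁻¹ * G).det - (G⁻¹ * (G - A)).trace

theorem broyd_preserves_eig_bounds {n : ℕ} (hn : 1 ≤ n)
    (A G : Matrix (Fin n) (Fin n) ℝ) (hA : A.PosDef) (hG : G.PosDef)
    (ξ η : ℝ) (hξ : 1 ≤ ξ) (hη : 1 ≤ η)
    (hlow : psdLE (ξ⁻¹ • A) G) (hup : psdLE G (η • A))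
    (u : Fin n → ℝ) (τ : ℝ) (hτ : τ ∈ Set.Icc (0 : ℝ) 1) :
    psdLE (ξ⁻¹ • A) (broyd τ A G u) ∧ psdLE (broyd τ A G u) (η • A) ∧
      (broyd τ A G u).PosDef := by
  obtain ⟨hτ0, hτ1⟩ := hτ
  by_cases hu : u = 0
  · simp only [broyd, if_pos hu]
    exact ⟨hlow, hup, hG⟩
  -- symmetry facts
  have hAt : Aᵀ = A := by
    rw [← conjTranspose_eq_transpose_of_trivial]; exact hA.1
  have hGt : Gᵀ = G := by
    rw [← conjTranspose_eq_transpose_of_trivial]; exact hG.1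
  have hlow' : (G - ξ⁻¹ • A).PosSemidef := hlow
  have hup' : (η • A - G).PosSemidef := hup
  have hξ0 : (0:ℝ) < ξ := lt_of_lt_of_le one_pos hξ
  have hμ0 : 0 < ξ⁻¹ := inv_pos.mpr hξ0
  have hμ1 : ξ⁻¹ ≤ 1 := inv_le_one_of_one_le₀ hξ
  -- quadratic form consequences of hlow / hup
  have hlowQ : ∀ y, ξ⁻¹ * (y ⬝ᵥ A *ᵥ y) ≤ y ⬝ᵥ G *ᵥ y := by
    intro y
    have h := (posSemidef_iff_dotProduct_mulVec.mp hlow').2 y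
    simp only [star_trivial, Matrix.sub_mulVec, Matrix.smul_mulVec, dotProduct_sub,
      dotProduct_smul, smul_eq_mul] at h
    linarith
  have hupQ : ∀ y, y ⬝ᵥ G *ᵥ y ≤ η * (y ⬝ᵥ A *ᵥ y) := by
    intro y
    have h := (posSemidef_iff_dotProduct_mulVec.mp hup').2 y
    simp only [star_trivial, Matrix.sub_mulVec, Matrix.smul_mulVec, dotProduct_sub,
      dotProduct_smul, smul_eq_mul] at h
    linarith
  -- scalar quantities
  have ha : 0 < u ⬝ᵥ A.mulVec u := by simpa using (posDef_iff_dotProduct_mulVec.mp hA).2 hu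
  have hg : 0 < u ⬝ᵥ G.mulVec u := by simpa using (posDef_iff_dotProduct_mulVec.mp hG).2 hu
  have hAu : A *ᵥ u ≠ 0 := by
    intro h
    rw [show A.mulVec u = A *ᵥ u from rfl, h, dotProduct_zero] at ha
    exact lt_irrefl 0 ha
  have haga : 0 < u ⬝ᵥ (A * G⁻¹ * A).mulVec u := by
    have hGinv : (G⁻¹).PosDef := hG.inv
    have h1 : u ⬝ᵥ (A * G⁻¹ * A).mulVec u = (A *ᵥ u) ⬝ᵥ G⁻¹ *ᵥ (A *ᵥ u) := by
      have h2 : (A * G⁻¹ * A) *ᵥ u = A *ᵥ (G⁻¹ *ᵥ (A *ᵥ u)) := by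
        rw [Matrix.mulVec_mulVec, Matrix.mulVec_mulVec]
      rw [show (A * G⁻¹ * A).mulVec u = (A * G⁻¹ * A) *ᵥ u from rfl, h2, dot_shift hAt]
    rw [h1]
    simpa using (posDef_iff_dotProduct_mulVec.mp hGinv).2 hAu
  -- the mixing coefficient
  set a : ℝ := u ⬝ᵥ A.mulVec u with ha_def
  set g : ℝ := u ⬝ᵥ G.mulVec u with hg_def
  set aga : ℝ := u ⬝ᵥ (A * G⁻¹ * A).mulVec u with haga_def
  set φ : ℝ := τ * (a / aga) / (τ * (a / aga) + (1 - τ) * (g / a)) with hφ_def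
  have hden : 0 < τ * (a / aga) + (1 - τ) * (g / a) := by
    rcases eq_or_lt_of_le hτ0 with h | h
    · rw [← h]
      simp only [zero_mul, zero_add, sub_zero, one_mul]
      positivity
    · have h1 : 0 < τ * (a / aga) := by positivity
      have h2 : 0 ≤ (1 - τ) * (g / a) := by
        apply mul_nonneg (by linarith)
        positivity
      linarith
  have hφ0 : 0 ≤ φ := by
    rw [hφ_def]
    apply div_nonneg _ hden.le
    apply mul_nonneg hτ0
    positivity
  have hφ1 : φ ≤ 1 := by
    rw [hφ_def, div_le_one hden]
    nlinarith [mul_nonneg (by linarith : (0:ℝ) ≤ 1 - τ)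
      (le_of_lt (by positivity : (0:ℝ) < g / a))]
  -- the two endpoint matrices
  set M1 : Matrix (Fin n) (Fin n) ℝ :=
    G - a⁻¹ • (A * vecMulVec u u * G + G * vecMulVec u u * A)
      + ((g / a + 1) / a) • (A * vecMulVec u u * A) with hM1_def
  set M2 : Matrix (Fin n) (Fin n) ℝ :=
    G - g⁻¹ • (G * vecMulVec u u * G) + a⁻¹ • (A * vecMulVec u u * A) with hM2_def
  have hrep : broyd τ A G u = φ • M1 + (1 - φ) • M2 := by
    simp only [broyd, if_neg hu, hM1_def, hM2_def, hφ_def, ha_def, hg_def, haga_def]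
  -- symmetry of M1 and M2
  have hM1t : M1ᵀ = M1 := by
    rw [hM1_def]
    simp only [Matrix.transpose_add, Matrix.transpose_sub, Matrix.transpose_smul,
      Matrix.transpose_mul, vecMulVec_self_transpose, hAt, hGt, Matrix.mul_assoc]
    rw [add_comm (G * (vecMulVec u u * A)) (A * (vecMulVec u u * G))]
  have hM2t : M2ᵀ = M2 := by
    rw [hM2_def]
    simp only [Matrix.transpose_add, Matrix.transpose_sub, Matrix.transpose_smul,
      Matrix.transpose_mul, vecMulVec_self_transpose, hAt, hGt, Matrix.mul_assoc]
  have hBt : (broyd τ A G u)ᵀ = broyd τ A G u := by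
    rw [hrep]
    simp only [Matrix.transpose_add, Matrix.transpose_smul, hM1t, hM2t]
  -- quadratic forms of M1 and M2
  have hq1 : ∀ x, x ⬝ᵥ M1 *ᵥ x =
      x ⬝ᵥ G *ᵥ x
        - a⁻¹ * ((x ⬝ᵥ A *ᵥ u) * (x ⬝ᵥ G *ᵥ u) + (x ⬝ᵥ G *ᵥ u) * (x ⬝ᵥ A *ᵥ u))
        + ((g / a + 1) / a) * ((x ⬝ᵥ A *ᵥ u) * (x ⬝ᵥ A *ᵥ u)) := by
    intro x
    rw [hM1_def]
    simp only [Matrix.add_mulVec, Matrix.sub_mulVec, Matrix.smul_mulVec,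
      dotProduct_add, dotProduct_sub, dotProduct_smul, smul_eq_mul, quad_sandwich,
      flip_symm hGt u x, flip_symm hAt u x]
  have hq2 : ∀ x, x ⬝ᵥ M2 *ᵥ x =
      x ⬝ᵥ G *ᵥ x - g⁻¹ * ((x ⬝ᵥ G *ᵥ u) * (x ⬝ᵥ G *ᵥ u))
        + a⁻¹ * ((x ⬝ᵥ A *ᵥ u) * (x ⬝ᵥ A *ᵥ u)) := by
    intro x
    rw [hM2_def]
    simp only [Matrix.add_mulVec, Matrix.sub_mulVec, Matrix.smul_mulVec,
      dotProduct_add, dotProduct_sub, dotProduct_smul, smul_eq_mul, quad_sandwich,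
      flip_symm hGt u x, flip_symm hAt u x]
  -- bounds on the quadratic forms
  have bound1 : ∀ x, ξ⁻¹ * (x ⬝ᵥ A *ᵥ x) ≤ x ⬝ᵥ M1 *ᵥ x ∧
      x ⬝ᵥ M1 *ᵥ x ≤ η * (x ⬝ᵥ A *ᵥ x) := by
    intro x
    rw [hq1 x]
    set y := x - ((x ⬝ᵥ A *ᵥ u) / a) • u with hy_def
    exact dfp_scalar ξ⁻¹ η a g (x ⬝ᵥ A *ᵥ x) (x ⬝ᵥ G *ᵥ x) (x ⬝ᵥ A *ᵥ u) (x ⬝ᵥ G *ᵥ u)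
      (y ⬝ᵥ G *ᵥ y) (y ⬝ᵥ A *ᵥ y) ha hμ0 hμ1 hη
      (expand_quad hGt u x _) (expand_quad hAt u x _) (hlowQ y) (hupQ y)
  have bound2 : ∀ x, ξ⁻¹ * (x ⬝ᵥ A *ᵥ x) ≤ x ⬝ᵥ M2 *ᵥ x ∧
      x ⬝ᵥ M2 *ᵥ x ≤ η * (x ⬝ᵥ A *ᵥ x) := by
    intro x
    rw [hq2 x]
    constructor
    · set z := x - ((x ⬝ᵥ G *ᵥ u) / g) • u with hz_def
      exact bfgs_lower_scalar ξ⁻¹ a g (x ⬝ᵥ A *ᵥ x) (x ⬝ᵥ G *ᵥ x) (x ⬝ᵥ A *ᵥ u)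
        (x ⬝ᵥ G *ᵥ u) (z ⬝ᵥ G *ᵥ z) (z ⬝ᵥ A *ᵥ z) ha hg hμ0 hμ1
        (expand_quad hGt u x _) (expand_quad hAt u x _) (hlowQ z)
    · set y := x - ((x ⬝ᵥ A *ᵥ u) / a) • u with hy_def
      exact bfgs_upper_scalar η a g (x ⬝ᵥ A *ᵥ x) (x ⬝ᵥ G *ᵥ x) (x ⬝ᵥ A *ᵥ u)
        (x ⬝ᵥ G *ᵥ u) (y ⬝ᵥ G *ᵥ y) (y ⬝ᵥ A *ᵥ y) ha hg hη
        (expand_quad hGt u x _) (expand_quad hAt u x _) (hupQ y)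
  -- bounds on the quadratic form of the Broyden update
  have hBq : ∀ x, x ⬝ᵥ (broyd τ A G u) *ᵥ x = φ * (x ⬝ᵥ M1 *ᵥ x) + (1 - φ) * (x ⬝ᵥ M2 *ᵥ x) := by
    intro x
    rw [hrep]
    simp only [Matrix.add_mulVec, Matrix.smul_mulVec, dotProduct_add, dotProduct_smul,
      smul_eq_mul]
  have hBl : ∀ x, ξ⁻¹ * (x ⬝ᵥ A *ᵥ x) ≤ x ⬝ᵥ (broyd τ A G u) *ᵥ x := by
    intro x
    rw [hBq x]
    nlinarith [(bound1 x).1, (bound2 x).1, hφ0, hφ1]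
  have hBu : ∀ x, x ⬝ᵥ (broyd τ A G u) *ᵥ x ≤ η * (x ⬝ᵥ A *ᵥ x) := by
    intro x
    rw [hBq x]
    nlinarith [(bound1 x).2, (bound2 x).2, hφ0, hφ1]
  refine ⟨posSemidef_iff_dotProduct_mulVec.mpr ⟨?_, ?_⟩, posSemidef_iff_dotProduct_mulVec.mpr ⟨?_, ?_⟩,
    posDef_iff_dotProduct_mulVec.mpr ⟨?_, ?_⟩⟩
  · apply isHermitian_of_symm'
    rw [Matrix.transpose_sub, Matrix.transpose_smul, hBt, hAt]
  · intro x
    simp only [star_trivial, Matrix.sub_mulVec, Matrix.smul_mulVec, dotProduct_sub,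
      dotProduct_smul, smul_eq_mul]
    have := hBl x
    linarith
  · apply isHermitian_of_symm'
    rw [Matrix.transpose_sub, Matrix.transpose_smul, hBt, hAt]
  · intro x
    simp only [star_trivial, Matrix.sub_mulVec, Matrix.smul_mulVec, dotProduct_sub,
      dotProduct_smul, smul_eq_mul]
    have := hBu x
    linarith
  · exact isHermitian_of_symm' hBt
  · intro x hx
    have h1 : 0 < ξ⁻¹ * (x ⬝ᵥ A *ᵥ x) := by
      apply mul_pos hμ0
      simpa using (posDef_iff_dotProduct_mulVec.mp hA).2 hx
    have h2 := hBl x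
    simp only [star_trivial]
    linarith
end

section
/- Let A, G be symmetric positive definite n×n matrices with A ⪯ G ⪯ η·A for some η ≥ 1. Then, for any τ ∈ [0,1] and any nonzero u ∈ ℝ^n, V(A, G) − V(A, Broyd_τ(A, G, u)) ≥ ln(1 + (τ/η + 1 − τ)·ν(A,G,u)²). -/
open Matrix Finset

section BroydAux

open scoped MatrixOrder

variable {n : ℕ}

lemma dot_symm' (M : Matrix (Fin n) (Fin n) ℝ) (hM : Mᵀ = M) (x v : Fin n → ℝ) :
    (M *ᵥ x) ⬝ᵥ v = x ⬝ᵥ (M *ᵥ v) := by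
  rw [dotProduct_comm, dotProduct_mulVec, ← mulVec_transpose, hM, dotProduct_comm]

lemma quad_conj' (M B : Matrix (Fin n) (Fin n) ℝ) (hM : Mᵀ = M) (x : Fin n → ℝ) :
    x ⬝ᵥ ((M * B * M) *ᵥ x) = (M *ᵥ x) ⬝ᵥ (B *ᵥ (M *ᵥ x)) := by
  rw [← mulVec_mulVec, ← mulVec_mulVec, ← dot_symm' M hM, mulVec_mulVec]

lemma psd_nonneg' {M : Matrix (Fin n) (Fin n) ℝ} (hM : M.PosSemidef) (x : Fin n → ℝ) :
    0 ≤ x ⬝ᵥ (M *ᵥ x) := by simpa using hM.dotProduct_mulVec_nonneg x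

lemma pd_pos' {M : Matrix (Fin n) (Fin n) ℝ} (hM : M.PosDef) {x : Fin n → ℝ} (hx : x ≠ 0) :
    0 < x ⬝ᵥ (M *ᵥ x) := by simpa using hM.dotProduct_mulVec_pos hx

lemma tsym' {M : Matrix (Fin n) (Fin n) ℝ} (hM : M.IsHermitian) : Mᵀ = M := by
  have := hM.eq; rwa [conjTranspose_eq_transpose_of_trivial] at this

lemma psd_mul_quad' {P Q : Matrix (Fin n) (Fin n) ℝ} (hP : P.PosSemidef) (hQ : Q.PosSemidef)
    (α β : ℝ) (hcomm : Q = α • (1 : Matrix (Fin n) (Fin n) ℝ) + β • P) (w : Fin n → ℝ) :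
    0 ≤ w ⬝ᵥ ((P * Q) *ᵥ w) := by
  set R := CFC.sqrt P with hRdef
  have hRpsd : R.PosSemidef := (CFC.sqrt_nonneg P).posSemidef
  have hRsym : Rᵀ = R := tsym' hRpsd.1
  have hRR : R * R = P := CFC.sqrt_mul_sqrt_self P hP.nonneg
  have hRQ : R * Q = Q * R := by
    rw [hcomm, Matrix.mul_add, Matrix.add_mul, Matrix.mul_smul, Matrix.smul_mul,
      Matrix.mul_smul, Matrix.smul_mul, Matrix.mul_one, Matrix.one_mul, ← hRR,
      Matrix.mul_assoc]
  have hPQ : P * Q = R * Q * R := by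
    rw [← hRR, Matrix.mul_assoc, hRQ, ← Matrix.mul_assoc, hRQ]
  rw [hPQ, quad_conj' R Q hRsym]
  exact psd_nonneg' hQ _

lemma mul_vecMulVec_mul' (A B : Matrix (Fin n) (Fin n) ℝ) (x y : Fin n → ℝ) :
    A * vecMulVec x y * B = vecMulVec (A *ᵥ x) (y ᵥ* B) := by
  ext i j
  simp [Matrix.mul_apply, vecMulVec_apply, Matrix.mulVec, Matrix.vecMul, dotProduct,
    Finset.sum_mul, Finset.mul_sum]
  apply Finset.sum_congr rfl; intros; apply Finset.sum_congr rfl; intros; ring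

lemma dot_lin' (c1 c2 : ℝ) (y z v : Fin n → ℝ) :
    (∑ j, (c1 * y j + c2 * z j) * v j) = c1 * (y ⬝ᵥ v) + c2 * (z ⬝ᵥ v) := by
  simp [dotProduct, Finset.mul_sum, ← Finset.sum_add_distrib]
  apply Finset.sum_congr rfl; intros; ring

end BroydAux
open scoped MatrixOrder in
set_option maxHeartbeats 4000000 in
theorem logdet_barrier_progress {n : ℕ} (hn : 1 ≤ n)
    (A G : Matrix (Fin n) (Fin n) ℝ) (hA : A.PosDef) (hG : G.PosDef)
    (η : ℝ) (hη : 1 ≤ η)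
    (hlow : psdLE A G) (hup : psdLE G (η • A))
    (τ : ℝ) (hτ : τ ∈ Set.Icc (0 : ℝ) 1) (u : Fin n → ℝ) (hu : u ≠ 0) :
    logDetBarrier A G - logDetBarrier A (broyd τ A G u) ≥
      Real.log (1 + (τ / η + 1 - τ) * nuMeas A G u ^ 2) := by
  have hXpsd : (G - A).PosSemidef := hlow
  have hYpsd : (η • A - G).PosSemidef := hup
  have hτ0 : 0 ≤ τ := hτ.1
  have hτ1 : τ ≤ 1 := hτ.2
  have hηpos : (0:ℝ) < η := lt_of_lt_of_le one_pos hη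
  have hAsym : Aᵀ = A := tsym' hA.1
  have hGsym : Gᵀ = G := tsym' hG.1
  have hXsym : (G - A)ᵀ = (G - A) := tsym' hXpsd.1
  have hGG : G * G⁻¹ = 1 := mul_nonsing_inv _ hG.det_pos.ne'.isUnit
  have hGG' : G⁻¹ * G = 1 := nonsing_inv_mul _ hG.det_pos.ne'.isUnit
  set y := A *ᵥ u with hy
  set z := G *ᵥ u with hz
  set v := G⁻¹ *ᵥ y with hv
  have hGiz : G⁻¹ *ᵥ z = u := by rw [hz, mulVec_mulVec, hGG', one_mulVec]
  have hGv : G *ᵥ v = y := by rw [hv, mulVec_mulVec, hGG, one_mulVec]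
  have hynz : y ≠ 0 := by
    intro h
    apply hu
    have h0 : A⁻¹ *ᵥ (A *ᵥ u) = 0 := by rw [← hy, h, mulVec_zero]
    rwa [mulVec_mulVec, nonsing_inv_mul _ hA.det_pos.ne'.isUnit, one_mulVec] at h0
  set a := u ⬝ᵥ y with ha_def
  set g := u ⬝ᵥ z with hg_def
  set s := y ⬝ᵥ v with hs_def
  have ha : 0 < a := pd_pos' hA hu
  have hg : 0 < g := pd_pos' hG hu
  have hs : 0 < s := pd_pos' hG.inv hynz
  have hzu : z ⬝ᵥ u = g := dotProduct_comm _ _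
  have hyu : y ⬝ᵥ u = a := dotProduct_comm _ _
  have hzv : z ⬝ᵥ v = a := by rw [hz, dot_symm' G hGsym, hGv, ← ha_def]
  have hsAGA : u ⬝ᵥ (A * G⁻¹ * A) *ᵥ u = s := by
    rw [← mulVec_mulVec, ← mulVec_mulVec, ← hy, ← hv, ← dot_symm' A hAsym, ← hy, ← hs_def]
  -- scalar expansions of key quadratic forms
  have hXu : (G - A) *ᵥ u = z - y := by rw [sub_mulVec]
  have hYu : (η • A - G) *ᵥ u = η • y - z := by rw [sub_mulVec, smul_mulVec]
  have e_P : u ⬝ᵥ ((G - A) *ᵥ u) = g - a := by rw [hXu, dotProduct_sub]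
  have e_q : u ⬝ᵥ (((G - A) * G⁻¹ * (G - A)) *ᵥ u) = g - 2*a + s := by
    rw [quad_conj' _ _ hXsym, hXu, mulVec_sub, hGiz, ← hv, sub_dotProduct,
      dotProduct_sub, dotProduct_sub, hzu, hzv, hyu, ← hs_def]
    ring
  have e_PQ : u ⬝ᵥ (((G - A) * G⁻¹ * (η • A - G)) *ᵥ u) = η*a - g - η*s + a := by
    rw [← mulVec_mulVec, ← mulVec_mulVec, hYu, mulVec_sub, mulVec_smul, ← hv, hGiz,
      ← dot_symm' _ hXsym, hXu, sub_dotProduct, dotProduct_sub, dotProduct_sub,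
      dotProduct_smul, dotProduct_smul, hzv, hzu, hyu, ← hs_def, smul_eq_mul, smul_eq_mul]
    ring
  have hq0 : 0 ≤ g - 2*a + s := by
    rw [← e_q]
    have hpsd := hG.inv.posSemidef.conjTranspose_mul_mul_same (G - A)
    rw [conjTranspose_eq_transpose_of_trivial, hXsym] at hpsd
    exact psd_nonneg' hpsd u
  -- square-root machinery for the two key inequalities
  have hGi : (G⁻¹).PosDef := hG.inv
  set S := CFC.sqrt G⁻¹ with hSdef
  have hSpsd : S.PosSemidef := (CFC.sqrt_nonneg G⁻¹).posSemidef
  have hSsym : Sᵀ = S := tsym' hSpsd.1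
  have hSS : S * S = G⁻¹ := CFC.sqrt_mul_sqrt_self G⁻¹ hGi.posSemidef.nonneg
  have hdetS : IsUnit S.det := by
    have h2 : S.det * S.det = G⁻¹.det := by rw [← det_mul, hSS]
    have hne : G⁻¹.det ≠ 0 := hGi.det_pos.ne'
    have hSne : S.det ≠ 0 := fun h => by rw [h, mul_zero] at h2; exact hne h2.symm
    exact hSne.isUnit
  have hSGS : S * G * S = 1 := by
    have h1 : S * (S * G) = 1 := by rw [← Matrix.mul_assoc, hSS, hGG']
    have h2 : (S * G) * S = 1 := mul_eq_one_comm.mp h1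
    rwa [Matrix.mul_assoc] at h2 ⊢
  set w := S⁻¹ *ᵥ u with hwdef
  have hSw : S *ᵥ w = u := by rw [hwdef, mulVec_mulVec, mul_nonsing_inv _ hdetS, one_mulVec]
  set P := S * (G - A) * S with hPdef
  set Q := S * (η • A - G) * S with hQdef
  have hPpsd : P.PosSemidef := by
    have h := hXpsd.mul_mul_conjTranspose_same S
    rwa [conjTranspose_eq_transpose_of_trivial, hSsym] at h
  have hQpsd : Q.PosSemidef := by
    have h := hYpsd.mul_mul_conjTranspose_same S
    rwa [conjTranspose_eq_transpose_of_trivial, hSsym] at h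
  have h1P : ((1 : Matrix (Fin n) (Fin n) ℝ) - P).PosSemidef := by
    have h : (1 : Matrix (Fin n) (Fin n) ℝ) - P = S * A * S := by
      rw [hPdef, ← hSGS, ← Matrix.sub_mul, ← Matrix.mul_sub, sub_sub_cancel]
    rw [h]
    have h2 := hA.posSemidef.mul_mul_conjTranspose_same S
    rwa [conjTranspose_eq_transpose_of_trivial, hSsym] at h2
  have hQP : Q = (η - 1) • (1 : Matrix (Fin n) (Fin n) ℝ) - η • P := by
    have e1 : (η:ℝ) • (G - A) + (η • A - G) = (η - 1) • G := by module
    have e2 : η • P + Q = (η - 1) • (S * G * S) := by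
      rw [hPdef, hQdef, ← Matrix.smul_mul, ← Matrix.mul_smul, ← Matrix.add_mul,
        ← Matrix.mul_add, e1, Matrix.mul_smul, Matrix.smul_mul]
    rw [hSGS] at e2
    linear_combination (norm := module) e2
  have hPP : P * P = S * ((G - A) * G⁻¹ * (G - A)) * S := by
    rw [hPdef, ← hSS]
    simp only [Matrix.mul_assoc]
  have hPQm : P * Q = S * ((G - A) * G⁻¹ * (η • A - G)) * S := by
    rw [hPdef, hQdef, ← hSS]
    simp only [Matrix.mul_assoc]
  have hF1 : s ≤ a := by
    have hm : P * (1 - P) = S * ((G - A) - (G - A) * G⁻¹ * (G - A)) * S := by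
      rw [Matrix.mul_sub, Matrix.mul_one, hPP, hPdef, ← Matrix.sub_mul, ← Matrix.mul_sub]
    have h1 : w ⬝ᵥ ((P * (1 - P)) *ᵥ w) = a - s := by
      rw [hm, quad_conj' _ _ hSsym, hSw, sub_mulVec, dotProduct_sub, e_P, e_q]
      ring
    have h2 : 0 ≤ w ⬝ᵥ ((P * (1 - P)) *ᵥ w) :=
      psd_mul_quad' hPpsd h1P 1 (-1) (by module) w
    linarith
  have hF2 : g - a ≤ η * (a - s) := by
    have h1 : w ⬝ᵥ ((P * Q) *ᵥ w) = η*a - g - η*s + a := by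
      rw [hPQm, quad_conj' _ _ hSsym, hSw, e_PQ]
    have h2 : 0 ≤ w ⬝ᵥ ((P * Q) *ᵥ w) :=
      psd_mul_quad' hPpsd hQpsd (η - 1) (-η) (by rw [hQP]; module) w
    have h3 : η * (a - s) = η*a - η*s := by ring
    rw [h3]; linarith [h1 ▸ h2]
  have hga : a ≤ g := by
    have h := psd_nonneg' hXpsd u; rw [e_P] at h; linarith
  -- the determinant of the Broyden update
  have hvmA : u ᵥ* A = y := by rw [← mulVec_transpose, hAsym, hy]
  have hvmG : u ᵥ* G = z := by rw [← mulVec_transpose, hGsym, hz]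
  have h1m : A * vecMulVec u u * G = vecMulVec y z := by
    rw [mul_vecMulVec_mul', ← hy, hvmG]
  have h2m : G * vecMulVec u u * A = vecMulVec z y := by
    rw [mul_vecMulVec_mul', ← hz, hvmA]
  have h3m : A * vecMulVec u u * A = vecMulVec y y := by
    rw [mul_vecMulVec_mul', ← hy, hvmA]
  have h4m : G * vecMulVec u u * G = vecMulVec z z := by
    rw [mul_vecMulVec_mul', ← hz, hvmG]
  set φ : ℝ := τ * (a / s) / (τ * (a / s) + (1 - τ) * (g / a)) with hφ
  set E : Matrix (Fin n) (Fin 2) ℝ := Matrix.of fun i k => if k = 0 then y i else z i with hE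
  set D : Matrix (Fin 2) (Fin n) ℝ := Matrix.of fun k j =>
    if k = 0 then ((φ * (g/a) + 1)/a) * y j + (-(φ/a)) * z j
    else (-(φ/a)) * y j + (-((1-φ)/g)) * z j with hD
  have hB : broyd τ A G u = G + E * D := by
    simp only [broyd, if_neg hu]
    rw [h1m, h2m, h3m, h4m, ← hy, ← hz, ← ha_def, ← hg_def, hsAGA, ← hφ]
    ext i j
    simp only [hE, hD, Matrix.add_apply, Matrix.sub_apply, Matrix.smul_apply, vecMulVec_apply,
      Matrix.mul_apply, Fin.sum_univ_two, Matrix.of_apply, smul_eq_mul]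
    norm_num
    field_simp
    ring
  have hdetB : (broyd τ A G u).det = G.det * (φ * (s/a) + (1-φ) * (a/g)) := by
    rw [hB]
    have hfac : G + E * D = G * (1 + (G⁻¹ * E) * D) := by
      rw [Matrix.mul_add, Matrix.mul_one, ← Matrix.mul_assoc, ← Matrix.mul_assoc, hGG,
        Matrix.one_mul]
    rw [hfac, det_mul, det_one_add_mul_comm]
    have hc0 : ∀ j, (G⁻¹ * E) j 0 = v j := by
      intro j; rw [hv]; simp [hE, Matrix.mul_apply, Matrix.mulVec, dotProduct]
    have hc1 : ∀ j, (G⁻¹ * E) j 1 = u j := by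
      intro j; rw [← hGiz]; simp [hE, Matrix.mul_apply, Matrix.mulVec, dotProduct]
    have hrow0 : ∀ j, D 0 j = ((φ * (g/a) + 1)/a) * y j + (-(φ/a)) * z j := by
      intro j; rw [hD]; simp
    have hrow1 : ∀ j, D 1 j = (-(φ/a)) * y j + (-((1-φ)/g)) * z j := by
      intro j; rw [hD]
      simp only [Matrix.of_apply, if_neg (by decide : ¬ (1:Fin 2) = 0)]
    have hN00 : (D * (G⁻¹ * E)) 0 0 = ((φ * (g/a) + 1)/a) * s + (-(φ/a)) * a := by
      rw [Matrix.mul_apply]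
      calc (∑ j, D 0 j * (G⁻¹ * E) j 0)
          = ∑ j, (((φ * (g/a) + 1)/a) * y j + (-(φ/a)) * z j) * v j := by
            apply Finset.sum_congr rfl; intro j _; rw [hc0, hrow0]
        _ = ((φ * (g/a) + 1)/a) * (y ⬝ᵥ v) + (-(φ/a)) * (z ⬝ᵥ v) := dot_lin' _ _ _ _ _
        _ = ((φ * (g/a) + 1)/a) * s + (-(φ/a)) * a := by rw [hzv, ← hs_def]
    have hN01 : (D * (G⁻¹ * E)) 0 1 = ((φ * (g/a) + 1)/a) * a + (-(φ/a)) * g := by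
      rw [Matrix.mul_apply]
      calc (∑ j, D 0 j * (G⁻¹ * E) j 1)
          = ∑ j, (((φ * (g/a) + 1)/a) * y j + (-(φ/a)) * z j) * u j := by
            apply Finset.sum_congr rfl; intro j _; rw [hc1, hrow0]
        _ = ((φ * (g/a) + 1)/a) * (y ⬝ᵥ u) + (-(φ/a)) * (z ⬝ᵥ u) := dot_lin' _ _ _ _ _
        _ = ((φ * (g/a) + 1)/a) * a + (-(φ/a)) * g := by rw [hyu, hzu]
    have hN10 : (D * (G⁻¹ * E)) 1 0 = (-(φ/a)) * s + (-((1-φ)/g)) * a := by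
      rw [Matrix.mul_apply]
      calc (∑ j, D 1 j * (G⁻¹ * E) j 0)
          = ∑ j, ((-(φ/a)) * y j + (-((1-φ)/g)) * z j) * v j := by
            apply Finset.sum_congr rfl; intro j _; rw [hc0, hrow1]
        _ = (-(φ/a)) * (y ⬝ᵥ v) + (-((1-φ)/g)) * (z ⬝ᵥ v) := dot_lin' _ _ _ _ _
        _ = (-(φ/a)) * s + (-((1-φ)/g)) * a := by rw [hzv, ← hs_def]
    have hN11 : (D * (G⁻¹ * E)) 1 1 = (-(φ/a)) * a + (-((1-φ)/g)) * g := by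
      rw [Matrix.mul_apply]
      calc (∑ j, D 1 j * (G⁻¹ * E) j 1)
          = ∑ j, ((-(φ/a)) * y j + (-((1-φ)/g)) * z j) * u j := by
            apply Finset.sum_congr rfl; intro j _; rw [hc1, hrow1]
        _ = (-(φ/a)) * (y ⬝ᵥ u) + (-((1-φ)/g)) * (z ⬝ᵥ u) := dot_lin' _ _ _ _ _
        _ = (-(φ/a)) * a + (-((1-φ)/g)) * g := by rw [hyu, hzu]
    rw [det_fin_two]
    simp only [Matrix.add_apply, Matrix.one_apply_eq,
      Matrix.one_apply_ne (by decide : (0:Fin 2) ≠ 1),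
      Matrix.one_apply_ne (by decide : (1:Fin 2) ≠ 0), hN00, hN01, hN10, hN11, zero_add]
    congr 1
    field_simp
    ring
  -- express the determinant ratio
  set dφ : ℝ := τ * (a / s) + (1 - τ) * (g / a) with hdφdef
  have hdφ : 0 < dφ := by
    rcases eq_or_lt_of_le hτ0 with h | h
    · rw [hdφdef, ← h]
      simp only [zero_mul, zero_add, sub_zero, one_mul]
      positivity
    · have h1 : 0 < τ * (a / s) := mul_pos h (div_pos ha hs)
      have h2 : 0 ≤ (1 - τ) * (g / a) :=
        mul_nonneg (by linarith) (div_pos hg ha).le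
      rw [hdφdef]; linarith
  have hφd : φ * dφ = τ * (a/s) := by
    rw [hφ]; exact div_mul_cancel₀ _ hdφ.ne'
  have hφd2 : (1-φ) * dφ = (1-τ) * (g/a) := by
    have e : (1-φ)*dφ = dφ - φ*dφ := by ring
    rw [e, hφd, hdφdef]; ring
  have hkdφ : (φ * (s/a) + (1-φ) * (a/g)) * dφ = 1 := by
    have e : (φ * (s/a) + (1-φ) * (a/g)) * dφ = (s/a)*(φ*dφ) + (a/g)*((1-φ)*dφ) := by ring
    rw [e, hφd, hφd2]
    field_simp
    ring
  have hkval : φ * (s/a) + (1-φ) * (a/g) = dφ⁻¹ := eq_inv_of_mul_eq_one_left hkdφ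
  -- log computation
  have hdetGpos := hG.det_pos
  have hdetApos := hA.det_pos
  have hdetAi : (A⁻¹).det = A.det⁻¹ := by
    rw [det_nonsing_inv, Ring.inverse_eq_inv]
  have hVG : logDetBarrier A G = Real.log A.det⁻¹ + Real.log G.det := by
    rw [logDetBarrier, det_mul, hdetAi, Real.log_mul (by positivity) hdetGpos.ne']
  have hVB : logDetBarrier A (broyd τ A G u)
      = Real.log A.det⁻¹ + Real.log G.det - Real.log dφ := by
    rw [logDetBarrier, det_mul, hdetAi, hdetB, hkval,
      Real.log_mul (inv_ne_zero hdetApos.ne')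
        (mul_ne_zero hdetGpos.ne' (inv_ne_zero hdφ.ne')),
      Real.log_mul hdetGpos.ne' (inv_ne_zero hdφ.ne'), Real.log_inv dφ]
    ring
  have hLHS : logDetBarrier A G - logDetBarrier A (broyd τ A G u) = Real.log dφ := by
    rw [hVG, hVB]; ring
  -- the value of ν²
  have hν : nuMeas A G u ^ 2 = (g - 2*a + s)/a := by
    rw [nuMeas, Real.sq_sqrt]
    · rw [e_q, ← hy, ← ha_def]
    · rw [e_q, ← hy, ← ha_def]
      exact div_nonneg hq0 ha.le
  -- final scalar inequality
  rw [hLHS, hν, ge_iff_le]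
  have hcν : 0 ≤ τ/η + 1 - τ := by
    have := div_nonneg hτ0 hηpos.le; linarith
  have hν0 : 0 ≤ (g - 2*a + s)/a := div_nonneg hq0 ha.le
  apply Real.log_le_log
  · nlinarith [mul_nonneg hcν hν0]
  · -- 1 + c * ν² ≤ dφ
    have t2 : (1-τ) * ((g - 2*a + s)/a) ≤ (1-τ) * (g/a - 1) := by
      apply mul_le_mul_of_nonneg_left _ (by linarith)
      have h1 : g/a - 1 = (g - a)/a := by field_simp
      rw [h1, div_le_div_iff₀ ha ha]
      nlinarith [hF1]
    have t1 : (τ/η) * ((g - 2*a + s)/a) ≤ τ * (a/s - 1) := by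
      have key : (g - 2*a + s)/a ≤ (η * (a - s))/s := by
        rw [div_le_div_iff₀ ha hs]
        nlinarith [mul_nonneg (sub_nonneg.2 hF1) (by linarith : (0:ℝ) ≤ g - a + s),
          mul_nonneg ha.le (by linarith : (0:ℝ) ≤ η * (a - s) - (g - a))]
      have h2 : (τ/η) * ((g - 2*a + s)/a) ≤ (τ/η) * ((η * (a - s))/s) :=
        mul_le_mul_of_nonneg_left key (div_nonneg hτ0 hηpos.le)
      have h3 : (τ/η) * ((η * (a - s))/s) = τ * (a/s - 1) := by
        field_simp
      linarith [h2, h3 ▸ h2]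
    have e1 : (τ/η + 1 - τ) * ((g - 2*a + s)/a)
        = (τ/η) * ((g - 2*a + s)/a) + (1-τ) * ((g - 2*a + s)/a) := by ring
    have e2 : τ * (a/s - 1) = τ * (a/s) - τ := by ring
    have e3 : (1-τ) * (g/a - 1) = (1-τ) * (g/a) - (1-τ) := by ring
    rw [hdφdef]
    linarith [t1, t2]
end

section
/- Let f : ℝ^n → ℝ be twice continuously differentiable with positive definite Hessian everywhere, and M-strongly self-concordant. Then for any x, y ∈ ℝ^n, with J := ∫₀¹ ∇²f(x + t(y − x)) dt and r := ‖y − x‖_x, one has (1 + Mr/2)⁻¹·∇²f(x) ⪯ J ⪯ (1 + Mr/2)·∇²f(x) and (1 + Mr/2)⁻¹·∇²f(y) ⪯ J ⪯ (1 + Mr/2)·∇²f(y). -/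
open Matrix Finset

/-- The Hessian matrix of `f` at `x` (second derivative in coordinate directions). -/
noncomputable def hessF {n : ℕ} (f : (Fin n → ℝ) → ℝ) (x : Fin n → ℝ) :
    Matrix (Fin n) (Fin n) ℝ :=
  Matrix.of fun i j => fderiv ℝ (fderiv ℝ f) x (Pi.single i 1) (Pi.single j 1)

/-- The gradient of `f` at `x`. -/
noncomputable def gradF {n : ℕ} (f : (Fin n → ℝ) → ℝ) (x : Fin n → ℝ) : Fin n → ℝ :=
  fun i => fderiv ℝ f x (Pi.single i 1)

/-- `f` is `M`-strongly self-concordant: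
`∇²f(y) − ∇²f(x) ⪯ M‖y−x‖_z ∇²f(w)` for all `x, y, z, w`. -/
def StronglySelfConcordant {n : ℕ} (f : (Fin n → ℝ) → ℝ) (M : ℝ) : Prop :=
  ∀ x y z w : Fin n → ℝ,
    psdLE (hessF f y - hessF f x)
      ((M * Real.sqrt ((y - x) ⬝ᵥ (hessF f z).mulVec (y - x))) • hessF f w)

/-- auxiliary lemmas -/
theorem quadform_integral {n : ℕ} (g : ℝ → Matrix (Fin n) (Fin n) ℝ)
    (hg : ∀ i j, Continuous fun t => g t i j) (v : Fin n → ℝ)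
    (J : Matrix (Fin n) (Fin n) ℝ)
    (hJ : J = Matrix.of fun i j => ∫ t in (0:ℝ)..1, g t i j) :
    v ⬝ᵥ J.mulVec v = ∫ t in (0:ℝ)..1, v ⬝ᵥ (g t).mulVec v := by
  have hInt : ∀ i j : Fin n, IntervalIntegrable (fun t => g t i j)
      MeasureTheory.volume 0 1 := fun i j => (hg i j).intervalIntegrable 0 1
  subst hJ
  simp only [dotProduct, Matrix.mulVec, Matrix.of_apply]
  have key : ∀ i : Fin n, v i * ∑ j, (∫ t in (0:ℝ)..1, g t i j) * v j
      = ∫ t in (0:ℝ)..1, v i * ∑ j, g t i j * v j := by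
    intro i
    rw [Finset.sum_congr rfl
      (fun j _ => (intervalIntegral.integral_mul_const (v j) _).symm),
      ← intervalIntegral.integral_finset_sum (fun j _ => (hInt i j).mul_const _),
      ← intervalIntegral.integral_const_mul]
  have hInt2 : ∀ i ∈ (Finset.univ : Finset (Fin n)), IntervalIntegrable
      (fun t => v i * ∑ j, g t i j * v j) MeasureTheory.volume 0 1 := by
    intro i _
    exact (continuous_const.mul (continuous_finset_sum _
      fun j _ => (hg i j).mul continuous_const)).intervalIntegrable 0 1
  exact (Finset.sum_congr rfl (fun i _ => key i)).trans
    (intervalIntegral.integral_finset_sum hInt2).symm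

theorem integ_lin (a b : ℝ) : ∫ t in (0:ℝ)..1, (a + b * t) = a + b / 2 := by
  rw [intervalIntegral.integral_add intervalIntegrable_const
    ((continuous_mul_left b).intervalIntegrable 0 1),
    intervalIntegral.integral_const, intervalIntegral.integral_const_mul,
    integral_id]
  norm_num [mul_one_div]

theorem tangent_ineq {s m P Q : ℝ} (hs : 0 ≤ s) (hsm : s ≤ 2*m) (hm : 0 ≤ m)
    (hQ : 0 ≤ Q) (hP : 0 ≤ P) (h : Q ≤ (1+s)*P) :
    ((1+m)⁻¹ - ((1+m)⁻¹)^2*(s-m))*Q ≤ P := by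
  have h1 : (0:ℝ) < 1 + m := by linarith
  set c := (1+m)⁻¹ with hcdef
  have hc : c * (1+m) = 1 := inv_mul_cancel₀ h1.ne'
  have hc0 : 0 ≤ c := by positivity
  have hcc : c^2 * (1+m) = c := by rw [pow_two, mul_assoc, hc, mul_one]
  have hc2 : c^2 * (1+m)^2 = 1 := by nlinarith [hc]
  have A1 : 0 ≤ c^2 * (1+2*m-s) * ((1+s)*P - Q) := by
    apply mul_nonneg (mul_nonneg (by positivity) (by linarith)) (by linarith)
  have B1 : 0 ≤ c^2 * (s-m)^2 * P := by positivity
  nlinarith [A1, B1, hcc, hc2]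
theorem integral_hessian_bounds {n : ℕ} (hn : 1 ≤ n)
    (f : (Fin n → ℝ) → ℝ) (hf : ContDiff ℝ 2 f)
    (hpos : ∀ x, (hessF f x).PosDef)
    (M : ℝ) (hM : 0 ≤ M) (hssc : StronglySelfConcordant f M)
    (x y : Fin n → ℝ)
    (J : Matrix (Fin n) (Fin n) ℝ)
    (hJ : J = Matrix.of fun i j => ∫ t in (0:ℝ)..1, hessF f (x + t • (y - x)) i j)
    (r : ℝ) (hr : r = Real.sqrt ((y - x) ⬝ᵥ (hessF f x).mulVec (y - x))) :
    psdLE ((1 + M * r / 2)⁻¹ • hessF f x) J ∧ psdLE J ((1 + M * r / 2) • hessF f x) ∧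
    psdLE ((1 + M * r / 2)⁻¹ • hessF f y) J ∧ psdLE J ((1 + M * r / 2) • hessF f y) := by

  -- setup
  set u : Fin n → ℝ := y - x with hu
  have h1 : ContDiff ℝ 1 (fderiv ℝ f) := hf.fderiv_right (by norm_num)
  have h2 : Continuous (fderiv ℝ (fderiv ℝ f)) := h1.continuous_fderiv one_ne_zero
  have hentry : ∀ i j : Fin n, Continuous fun t : ℝ => hessF f (x + t • u) i j := by
    intro i j
    have h3 : Continuous fun z : Fin n → ℝ =>
        fderiv ℝ (fderiv ℝ f) z (Pi.single i 1) (Pi.single j 1) :=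
      (h2.clm_apply continuous_const).clm_apply continuous_const
    exact h3.comp (by continuity)
  have hq0 : ∀ (z v : Fin n → ℝ), 0 ≤ v ⬝ᵥ (hessF f z).mulVec v :=
    fun z v => by simpa using (hpos z).posSemidef.dotProduct_mulVec_nonneg v
  have hr0 : 0 ≤ r := hr ▸ Real.sqrt_nonneg _
  have hMr : 0 ≤ M * r := mul_nonneg hM hr0
  have hden : (0:ℝ) < 1 + M * r / 2 := by linarith
  set c : ℝ := (1 + M * r / 2)⁻¹ with hcdef
  -- scaling of the local norm
  have hsc : ∀ s : ℝ, Real.sqrt ((s • u) ⬝ᵥ (hessF f x).mulVec (s • u)) = |s| * r := by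
    intro s
    have hq : (s • u) ⬝ᵥ (hessF f x).mulVec (s • u)
        = s^2 * (u ⬝ᵥ (hessF f x).mulVec u) := by
      simp only [Matrix.mulVec_smul, smul_dotProduct, dotProduct_smul,
        smul_eq_mul]
      ring
    rw [hq, Real.sqrt_mul (sq_nonneg s), Real.sqrt_sq_eq_abs, hr]
  -- scalar form of strong self-concordance
  have hssc' : ∀ a b z w v : Fin n → ℝ,
      v ⬝ᵥ (hessF f b).mulVec v - v ⬝ᵥ (hessF f a).mulVec v ≤
        M * Real.sqrt ((b - a) ⬝ᵥ (hessF f z).mulVec (b - a))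
          * (v ⬝ᵥ (hessF f w).mulVec v) := by
    intro a b z w v
    have h0 := hssc a b z w
    unfold psdLE at h0
    have h := h0.dotProduct_mulVec_nonneg v
    simp only [star_trivial, Matrix.sub_mulVec, Matrix.smul_mulVec,
      dotProduct_sub, dotProduct_smul, smul_eq_mul] at h
    linarith
  -- quadratic forms along the path are continuous
  have hqc : ∀ v : Fin n → ℝ,
      Continuous fun t : ℝ => v ⬝ᵥ (hessF f (x + t • u)).mulVec v := by
    intro v
    simp only [Matrix.mulVec, dotProduct]
    exact continuous_finset_sum _ fun i _ => continuous_const.mul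
      (continuous_finset_sum _ fun j _ => (hentry i j).mul continuous_const)
  have hJq : ∀ v : Fin n → ℝ, v ⬝ᵥ J.mulVec v
      = ∫ t in (0:ℝ)..1, v ⬝ᵥ (hessF f (x + t • u)).mulVec v :=
    fun v => quadform_integral (fun t => hessF f (x + t • u)) hentry v J hJ
  -- difference identities
  have hd1 : ∀ t : ℝ, (x + t • u) - x = t • u := fun t => add_sub_cancel_left x _
  have hd2 : ∀ t : ℝ, x - (x + t • u) = (-t) • u := by
    intro t; rw [neg_smul]; abel
  have hd3 : ∀ t : ℝ, (x + t • u) - y = (t - 1) • u := by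
    intro t; rw [sub_smul, one_smul, hu]; abel
  have hd4 : ∀ t : ℝ, y - (x + t • u) = (1 - t) • u := by
    intro t; rw [sub_smul, one_smul, hu]; abel
  -- J is Hermitian
  have hHh : ∀ z : Fin n → ℝ, (hessF f z).IsHermitian := fun z => (hpos z).1
  have hJh : J.IsHermitian := by
    show Jᴴ = J
    ext i j
    rw [Matrix.conjTranspose_apply, star_trivial, hJ]
    simp only [Matrix.of_apply]
    exact intervalIntegral.integral_congr fun t _ => by
      rw [← (hHh (x + t • u)).apply j i, star_trivial]
  have hsmulh : ∀ (a : ℝ) (A : Matrix (Fin n) (Fin n) ℝ), A.IsHermitian →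
      (a • A).IsHermitian := by
    intro a A hA
    show (a • A)ᴴ = a • A
    rw [Matrix.conjTranspose_smul, star_trivial, hA.eq]
  -- pointwise bounds and integration
  have hlin : ∀ a b : ℝ, IntervalIntegrable (fun t : ℝ => a + b * t)
      MeasureTheory.volume 0 1 :=
    fun a b => (continuous_const.add (continuous_const.mul
      continuous_id')).intervalIntegrable 0 1
  have habs : ∀ t : ℝ, t ∈ Set.Icc (0:ℝ) 1 → |t| = t ∧ |(-t)| = t ∧
      |t - 1| = 1 - t ∧ |1 - t| = 1 - t := by
    intro t ht
    refine ⟨abs_of_nonneg ht.1, ?_, ?_, abs_of_nonneg (by linarith [ht.2])⟩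
    · rw [abs_neg]; exact abs_of_nonneg ht.1
    · rw [abs_of_nonpos (by linarith [ht.2])]; ring
  refine ⟨.of_dotProduct_mulVec_nonneg (hJh.sub (hsmulh _ _ (hHh x))) fun v => ?_,
      .of_dotProduct_mulVec_nonneg ((hsmulh _ _ (hHh x)).sub hJh) fun v => ?_,
      .of_dotProduct_mulVec_nonneg (hJh.sub (hsmulh _ _ (hHh y))) fun v => ?_,
      .of_dotProduct_mulVec_nonneg ((hsmulh _ _ (hHh y)).sub hJh) fun v => ?_⟩
  -- lower bound at x
  · simp only [star_trivial, Matrix.sub_mulVec, Matrix.smul_mulVec,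
      dotProduct_sub, dotProduct_smul, smul_eq_mul, sub_nonneg, hJq v]
    set Qx : ℝ := v ⬝ᵥ (hessF f x).mulVec v with hQx
    have pt : ∀ t ∈ Set.Icc (0:ℝ) 1,
        (c + c^2*(M*r/2))*Qx + (-(c^2*M*r*Qx))*t
          ≤ v ⬝ᵥ (hessF f (x + t • u)).mulVec v := by
      intro t ht
      set P : ℝ := v ⬝ᵥ (hessF f (x + t • u)).mulVec v with hP
      have h := hssc' (x + t • u) x x (x + t • u) v
      rw [hd2 t, hsc (-t), (habs t ht).2.1] at h
      have hQle : Qx ≤ (1 + M*(t*r))*P := by nlinarith [h]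
      have htan := tangent_ineq (s := M*(t*r)) (m := M*r/2)
        (mul_nonneg hM (mul_nonneg ht.1 hr0)) (by nlinarith [hMr, ht.2]) (by positivity)
        (hq0 x v) (hq0 _ v) hQle
      rw [← hcdef] at htan
      nlinarith [htan]
    calc c * Qx = (c + c^2*(M*r/2))*Qx + (-(c^2*M*r*Qx))/2 := by ring
      _ = ∫ t in (0:ℝ)..1, ((c + c^2*(M*r/2))*Qx + (-(c^2*M*r*Qx))*t) :=
        (integ_lin _ _).symm
      _ ≤ ∫ t in (0:ℝ)..1, v ⬝ᵥ (hessF f (x + t • u)).mulVec v :=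
        intervalIntegral.integral_mono_on (by norm_num) (hlin _ _)
          ((hqc v).intervalIntegrable 0 1) pt
  -- upper bound at x
  · simp only [star_trivial, Matrix.sub_mulVec, Matrix.smul_mulVec,
      dotProduct_sub, dotProduct_smul, smul_eq_mul, sub_nonneg, hJq v]
    set Qx : ℝ := v ⬝ᵥ (hessF f x).mulVec v with hQx
    have pt : ∀ t ∈ Set.Icc (0:ℝ) 1,
        v ⬝ᵥ (hessF f (x + t • u)).mulVec v ≤ Qx + (M*r*Qx)*t := by
      intro t ht
      have h := hssc' x (x + t • u) x x v
      rw [hd1 t, hsc t, (habs t ht).1] at h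
      nlinarith [h]
    calc (∫ t in (0:ℝ)..1, v ⬝ᵥ (hessF f (x + t • u)).mulVec v)
        ≤ ∫ t in (0:ℝ)..1, (Qx + (M*r*Qx)*t) :=
          intervalIntegral.integral_mono_on (by norm_num)
            ((hqc v).intervalIntegrable 0 1) (hlin _ _) pt
      _ = Qx + (M*r*Qx)/2 := integ_lin _ _
      _ = (1 + M*r/2)*Qx := by ring
  -- lower bound at y
  · simp only [star_trivial, Matrix.sub_mulVec, Matrix.smul_mulVec,
      dotProduct_sub, dotProduct_smul, smul_eq_mul, sub_nonneg, hJq v]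
    set Qy : ℝ := v ⬝ᵥ (hessF f y).mulVec v with hQy
    have pt : ∀ t ∈ Set.Icc (0:ℝ) 1,
        (c - c^2*(M*r/2))*Qy + (c^2*M*r*Qy)*t
          ≤ v ⬝ᵥ (hessF f (x + t • u)).mulVec v := by
      intro t ht
      set P : ℝ := v ⬝ᵥ (hessF f (x + t • u)).mulVec v with hP
      have h := hssc' (x + t • u) y x (x + t • u) v
      rw [hd4 t, hsc (1 - t), (habs t ht).2.2.2] at h
      have hQle : Qy ≤ (1 + M*((1-t)*r))*P := by nlinarith [h]
      have htan := tangent_ineq (s := M*((1-t)*r)) (m := M*r/2)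
        (by nlinarith [hMr, ht.2]) (by nlinarith [hMr, ht.1]) (by positivity)
        (hq0 y v) (hq0 _ v) hQle
      rw [← hcdef] at htan
      nlinarith [htan]
    calc c * Qy = (c - c^2*(M*r/2))*Qy + (c^2*M*r*Qy)/2 := by ring
      _ = ∫ t in (0:ℝ)..1, ((c - c^2*(M*r/2))*Qy + (c^2*M*r*Qy)*t) :=
        (integ_lin _ _).symm
      _ ≤ ∫ t in (0:ℝ)..1, v ⬝ᵥ (hessF f (x + t • u)).mulVec v :=
        intervalIntegral.integral_mono_on (by norm_num) (hlin _ _)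
          ((hqc v).intervalIntegrable 0 1) pt
  -- upper bound at y
  · simp only [star_trivial, Matrix.sub_mulVec, Matrix.smul_mulVec,
      dotProduct_sub, dotProduct_smul, smul_eq_mul, sub_nonneg, hJq v]
    set Qy : ℝ := v ⬝ᵥ (hessF f y).mulVec v with hQy
    have pt : ∀ t ∈ Set.Icc (0:ℝ) 1,
        v ⬝ᵥ (hessF f (x + t • u)).mulVec v ≤ (Qy + M*r*Qy) + (-(M*r*Qy))*t := by
      intro t ht
      have h := hssc' y (x + t • u) x y v
      rw [hd3 t, hsc (t - 1), (habs t ht).2.2.1] at h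
      nlinarith [h]
    calc (∫ t in (0:ℝ)..1, v ⬝ᵥ (hessF f (x + t • u)).mulVec v)
        ≤ ∫ t in (0:ℝ)..1, ((Qy + M*r*Qy) + (-(M*r*Qy))*t) :=
          intervalIntegral.integral_mono_on (by norm_num)
            ((hqc v).intervalIntegrable 0 1) (hlin _ _) pt
      _ = (Qy + M*r*Qy) + (-(M*r*Qy))/2 := integ_lin _ _
      _ = (1 + M*r/2)*Qy := by ring
end

section
/- In the general quasi-Newton scheme, for all k ≥ 0 one has (1/ξ_k)·∇²f(x_k) ⪯ G_k ⪯ ξ_k·(L/μ)·∇²f(x_k) and (1/ξ_{k+1})·J_k ⪯ G_k ⪯ ξ_{k+1}·(L/μ)·J_k. -/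
open Matrix Finset

namespace QN
variable {n : ℕ}

lemma herm_transpose {X : Matrix (Fin n) (Fin n) ℝ} (hX : X.IsHermitian) : Xᵀ = X := by
  ext i j
  simpa [conjTranspose_apply] using congrFun (congrFun hX.eq i) j

lemma herm_of_transpose {X : Matrix (Fin n) (Fin n) ℝ} (h : Xᵀ = X) : X.IsHermitian := by
  ext i j
  simp only [conjTranspose_apply, star_trivial]
  have := congrFun (congrFun h j) i
  simp only [transpose_apply] at this
  exact this.symm ▸ rfl

lemma symdot {X : Matrix (Fin n) (Fin n) ℝ} (hX : X.IsHermitian) (v w : Fin n → ℝ) :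
    v ⬝ᵥ X.mulVec w = w ⬝ᵥ X.mulVec v := by
  rw [dotProduct_mulVec, ← vecMul_transpose, herm_transpose hX, dotProduct_comm]

lemma vmv (u w : Fin n → ℝ) : (vecMulVec u u).mulVec w = (u ⬝ᵥ w) • u := by
  ext i
  simp only [vecMulVec_apply, mulVec, dotProduct, Pi.smul_apply, smul_eq_mul, Finset.sum_mul]
  exact Finset.sum_congr rfl fun j _ => by ring

lemma psdLE_of {P Q : Matrix (Fin n) (Fin n) ℝ} (hsym : (Q - P)ᵀ = Q - P)
    (h : ∀ v, v ⬝ᵥ P.mulVec v ≤ v ⬝ᵥ Q.mulVec v) : psdLE P Q := by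
  refine Matrix.PosSemidef.of_dotProduct_mulVec_nonneg (herm_of_transpose hsym) fun x => ?_
  have := h x
  simp only [star_trivial, sub_mulVec, dotProduct_sub, sub_nonneg]
  exact this

lemma psdLE.le {P Q : Matrix (Fin n) (Fin n) ℝ} (h : psdLE P Q) (v : Fin n → ℝ) :
    v ⬝ᵥ P.mulVec v ≤ v ⬝ᵥ Q.mulVec v := by
  have := h.dotProduct_mulVec_nonneg v
  simp only [star_trivial, sub_mulVec, dotProduct_sub, sub_nonneg] at this
  exact this

lemma qf_smul (c : ℝ) (X : Matrix (Fin n) (Fin n) ℝ) (v : Fin n → ℝ) :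
    v ⬝ᵥ (c • X).mulVec v = c * (v ⬝ᵥ X.mulVec v) := by
  simp [smul_mulVec, dotProduct_smul]

lemma qf_triple (X Y : Matrix (Fin n) (Fin n) ℝ) (u v : Fin n → ℝ) :
    v ⬝ᵥ (X * vecMulVec u u * Y).mulVec v
      = (v ⬝ᵥ X.mulVec u) * (u ⬝ᵥ Y.mulVec v) := by
  rw [← mulVec_mulVec, ← mulVec_mulVec, vmv, mulVec_smul, dotProduct_smul]
  simp [smul_eq_mul, mul_comm]

end QN

namespace QN
variable {n : ℕ}

lemma pd_dot {X : Matrix (Fin n) (Fin n) ℝ} (hX : X.PosDef) {v : Fin n → ℝ} (hv : v ≠ 0) :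
    0 < v ⬝ᵥ X.mulVec v := by
  have := hX.dotProduct_mulVec_pos hv
  simpa using this

lemma psd_dot {X : Matrix (Fin n) (Fin n) ℝ} (hX : X.PosSemidef) (v : Fin n → ℝ) :
    0 ≤ v ⬝ᵥ X.mulVec v := by
  have := hX.dotProduct_mulVec_nonneg v
  simpa using this

lemma qf_sub_smul {X : Matrix (Fin n) (Fin n) ℝ} (hX : X.IsHermitian) (v u : Fin n → ℝ) (e : ℝ) :
    (v - e • u) ⬝ᵥ X.mulVec (v - e • u)
      = v ⬝ᵥ X.mulVec v - 2*e*(u ⬝ᵥ X.mulVec v) + e^2*(u ⬝ᵥ X.mulVec u) := by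
  have h1 : v ⬝ᵥ X.mulVec u = u ⬝ᵥ X.mulVec v := symdot hX v u
  simp only [sub_mulVec, mulVec_sub, mulVec_smul, dotProduct_sub, sub_dotProduct,
    dotProduct_smul, smul_dotProduct, smul_eq_mul, h1]
  ring

lemma scalar_bounds {a g gu guu auu c d α β : ℝ} (hauu : 0 < auu) (hguu : 0 < guu)
    (hα0 : 0 ≤ α) (hα : α ≤ 1) (hβ : 1 ≤ β) (hd : gu = d * guu)
    (hlow : ∀ e : ℝ, α * (a - 2*e*(c*auu) + e^2*auu) ≤ g - 2*e*gu + e^2*guu)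
    (hup : ∀ e : ℝ, g - 2*e*gu + e^2*guu ≤ β * (a - 2*e*(c*auu) + e^2*auu)) :
    (α * a ≤ g - 2*c*gu + c^2*guu + c^2*auu) ∧ (g - 2*c*gu + c^2*guu + c^2*auu ≤ β * a)
    ∧ (α * a ≤ g - 2*d*gu + d^2*guu + c^2*auu) ∧ (g - 2*d*gu + d^2*guu + c^2*auu ≤ β * a) := by
  subst hd
  refine ⟨?_, ?_, ?_, ?_⟩
  · nlinarith [hlow c, sq_nonneg c, mul_nonneg (sq_nonneg c) hauu.le]
  · nlinarith [hup c, sq_nonneg c, mul_nonneg (sq_nonneg c) hauu.le]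
  · nlinarith [hlow d, mul_nonneg (sq_nonneg (d - c)) hauu.le,
      mul_nonneg hα0 (mul_nonneg (sq_nonneg (d - c)) hauu.le),
      mul_nonneg (sq_nonneg c) hauu.le]
  · nlinarith [hup c, mul_nonneg (sq_nonneg (c - d)) hguu.le,
      mul_nonneg (sq_nonneg c) hauu.le]

lemma vmvT (u : Fin n → ℝ) : (vecMulVec u u)ᵀ = vecMulVec u u := by
  ext i j; simp [vecMulVec_apply, mul_comm]

lemma tripleT (u : Fin n → ℝ) (X Y : Matrix (Fin n) (Fin n) ℝ) :
    (X * vecMulVec u u * Y)ᵀ = Yᵀ * vecMulVec u u * Xᵀ := by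
  rw [transpose_mul, transpose_mul, vmvT, Matrix.mul_assoc]

lemma broyd_transpose {A G : Matrix (Fin n) (Fin n) ℝ} (hA : A.IsHermitian)
    (hG : G.IsHermitian) (u : Fin n → ℝ) (τ : ℝ) :
    (broyd τ A G u)ᵀ = broyd τ A G u := by
  by_cases hu : u = 0
  · simp [broyd, hu, herm_transpose hG]
  · simp only [broyd, if_neg hu, transpose_add, transpose_smul, transpose_sub, tripleT,
      herm_transpose hA, herm_transpose hG]
    rw [add_comm (G * vecMulVec u u * A) (A * vecMulVec u u * G)]

end QN

namespace QN
variable {n : ℕ}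

set_option maxHeartbeats 1000000 in
lemma broyd_qf {A G : Matrix (Fin n) (Fin n) ℝ} (hA : A.PosDef) (hG : G.PosDef)
    (u v : Fin n → ℝ) {τ α β : ℝ} (hτ0 : 0 ≤ τ) (hτ1 : τ ≤ 1)
    (hα0 : 0 < α) (hα : α ≤ 1) (hβ : 1 ≤ β)
    (hlow : ∀ w, α * (w ⬝ᵥ A.mulVec w) ≤ w ⬝ᵥ G.mulVec w)
    (hup : ∀ w, w ⬝ᵥ G.mulVec w ≤ β * (w ⬝ᵥ A.mulVec w)) :
    α * (v ⬝ᵥ A.mulVec v) ≤ v ⬝ᵥ (broyd τ A G u).mulVec v ∧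
      v ⬝ᵥ (broyd τ A G u).mulVec v ≤ β * (v ⬝ᵥ A.mulVec v) := by
  by_cases hu : u = 0
  · simp only [broyd, if_pos hu]
    exact ⟨hlow v, hup v⟩
  · set a := v ⬝ᵥ A.mulVec v with ha_def
    set g := v ⬝ᵥ G.mulVec v with hg_def
    set au := u ⬝ᵥ A.mulVec v with hau_def
    set gu := u ⬝ᵥ G.mulVec v with hgu_def
    set auu := u ⬝ᵥ A.mulVec u with hauu_def
    set guu := u ⬝ᵥ G.mulVec u with hguu_def
    have hauu : 0 < auu := pd_dot hA hu
    have hguu : 0 < guu := pd_dot hG hu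
    -- positivity of the aga term
    have hAu : A.mulVec u ≠ 0 := by
      intro h
      rw [hauu_def, h, dotProduct_zero] at hauu
      exact lt_irrefl _ hauu
    have haga_eq : u ⬝ᵥ (A * G⁻¹ * A).mulVec u = (A.mulVec u) ⬝ᵥ G⁻¹.mulVec (A.mulVec u) := by
      rw [← mulVec_mulVec, ← mulVec_mulVec, dotProduct_mulVec]
      congr 1
      rw [← vecMul_transpose, herm_transpose hA.1]
    have haga : 0 < u ⬝ᵥ (A * G⁻¹ * A).mulVec u := by
      rw [haga_eq]
      exact pd_dot hG.inv hAu
    set aga := u ⬝ᵥ (A * G⁻¹ * A).mulVec u with haga_def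
    set σ : ℝ := auu / aga with hσ_def
    set ρ : ℝ := guu / auu with hρ_def
    have hσ : 0 < σ := div_pos hauu haga
    have hρ : 0 < ρ := div_pos hguu hauu
    have hden : 0 < τ * σ + (1 - τ) * ρ := by
      rcases eq_or_lt_of_le hτ0 with h | h
      · rw [← h]; simpa using hρ
      · exact add_pos_of_pos_of_nonneg (mul_pos h hσ)
          (mul_nonneg (by linarith) hρ.le)
    set φ : ℝ := τ * σ / (τ * σ + (1 - τ) * ρ) with hφ_def
    have hφ0 : 0 ≤ φ := div_nonneg (mul_nonneg hτ0 hσ.le) hden.le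
    have hφ1 : φ ≤ 1 := by
      rw [hφ_def, div_le_one hden]
      nlinarith [mul_nonneg (sub_nonneg.2 hτ1) hρ.le]
    -- expand the quadratic form
    have e1 : v ⬝ᵥ A.mulVec u = au := symdot hA.1 v u
    have e2 : v ⬝ᵥ G.mulVec u = gu := symdot hG.1 v u
    have key : v ⬝ᵥ (broyd τ A G u).mulVec v
        = φ * (g - auu⁻¹ * (au * gu + gu * au) + ((ρ + 1) / auu) * (au * au))
          + (1 - φ) * (g - guu⁻¹ * (gu * gu) + auu⁻¹ * (au * au)) := by
      simp only [broyd, if_neg hu, add_mulVec, smul_mulVec, sub_mulVec,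
        dotProduct_add, dotProduct_smul, dotProduct_sub, qf_triple, smul_eq_mul, e1, e2,
        ← ha_def, ← hg_def, ← hau_def, ← hgu_def, ← hauu_def, ← hguu_def, ← haga_def,
        ← hρ_def, ← hσ_def, ← hφ_def]
    clear_value a g au gu auu guu aga σ ρ φ
    set c : ℝ := au / auu with hc_def
    set d : ℝ := gu / guu with hd_def
    have hc : c * auu = au := div_mul_cancel₀ _ hauu.ne'
    have hd : gu = d * guu := (div_mul_cancel₀ _ hguu.ne').symm
    clear_value c d
    have hlow' : ∀ e : ℝ, α * (a - 2*e*(c*auu) + e^2*auu) ≤ g - 2*e*gu + e^2*guu := by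
      intro e
      have h := hlow (v - e • u)
      rw [qf_sub_smul hA.1, qf_sub_smul hG.1] at h
      rw [hc, ha_def, hau_def, hauu_def, hg_def, hgu_def, hguu_def]
      exact h
    have hup' : ∀ e : ℝ, g - 2*e*gu + e^2*guu ≤ β * (a - 2*e*(c*auu) + e^2*auu) := by
      intro e
      have h := hup (v - e • u)
      rw [qf_sub_smul hA.1, qf_sub_smul hG.1] at h
      rw [hc, ha_def, hau_def, hauu_def, hg_def, hgu_def, hguu_def]
      exact h
    obtain ⟨l1, l2, l3, l4⟩ := scalar_bounds hauu hguu hα0.le hα hβ hd hlow' hup'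
    have eQD : g - auu⁻¹ * (au * gu + gu * au) + ((ρ + 1) / auu) * (au * au)
        = g - 2*c*gu + c^2*guu + c^2*auu := by
      rw [hρ_def, hc_def]
      field_simp [hauu.ne', hguu.ne']
      ring
    have eQB : g - guu⁻¹ * (gu * gu) + auu⁻¹ * (au * au)
        = g - 2*d*gu + d^2*guu + c^2*auu := by
      rw [hd_def, hc_def]
      field_simp [hauu.ne', hguu.ne']
      ring
    rw [key, eQD, eQB]
    constructor
    · nlinarith [mul_le_mul_of_nonneg_left l1 hφ0,
        mul_le_mul_of_nonneg_left l3 (by linarith : (0:ℝ) ≤ 1 - φ)]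
    · nlinarith [mul_le_mul_of_nonneg_left l2 hφ0,
        mul_le_mul_of_nonneg_left l4 (by linarith : (0:ℝ) ≤ 1 - φ)]

end QN


namespace QN
variable {n : ℕ} {f : (Fin n → ℝ) → ℝ}

lemma cont_hess_entry (hf : ContDiff ℝ 2 f) (x u : Fin n → ℝ) (i j : Fin n) :
    Continuous fun t : ℝ => hessF f (x + t • u) i j := by
  have h1 : ContDiff ℝ 1 (fderiv ℝ f) := hf.fderiv_right (by norm_num)
  have h2 : Continuous (fderiv ℝ (fderiv ℝ f)) := h1.continuous_fderiv (by norm_num)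
  have hline : Continuous fun t : ℝ => x + t • u :=
    continuous_const.add (continuous_id.smul continuous_const)
  have h3 : Continuous fun y => fderiv ℝ (fderiv ℝ f) y (Pi.single i 1) (Pi.single j 1) :=
    (h2.clm_apply continuous_const).clm_apply continuous_const
  exact h3.comp hline

lemma cont_qf (hf : ContDiff ℝ 2 f) (x u v : Fin n → ℝ) :
    Continuous fun t : ℝ => v ⬝ᵥ (hessF f (x + t • u)).mulVec v := by
  show Continuous fun t : ℝ => ∑ i, v i * ∑ j, hessF f (x + t • u) i j * v j
  refine continuous_finset_sum _ fun i _ => Continuous.mul continuous_const ?_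
  exact continuous_finset_sum _ fun j _ => (cont_hess_entry hf x u i j).mul continuous_const

lemma qf_J (hf : ContDiff ℝ 2 f) (x u v : Fin n → ℝ) :
    v ⬝ᵥ (Matrix.of fun i j => ∫ t in (0:ℝ)..1, hessF f (x + t • u) i j).mulVec v
      = ∫ t in (0:ℝ)..1, v ⬝ᵥ (hessF f (x + t • u)).mulVec v := by
  have hint : ∀ i j, IntervalIntegrable (fun t => hessF f (x + t • u) i j * v j)
      MeasureTheory.volume 0 1 := fun i j =>
    ((cont_hess_entry hf x u i j).mul continuous_const).intervalIntegrable _ _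
  show (∑ i, v i * ∑ j, (∫ t in (0:ℝ)..1, hessF f (x + t • u) i j) * v j) = _
  have step1 : ∀ i, v i * ∑ j, (∫ t in (0:ℝ)..1, hessF f (x + t • u) i j) * v j
      = ∫ t in (0:ℝ)..1, v i * ∑ j, hessF f (x + t • u) i j * v j := by
    intro i
    rw [intervalIntegral.integral_const_mul]
    congr 1
    rw [intervalIntegral.integral_finset_sum (fun j _ => hint i j)]
    exact Finset.sum_congr rfl fun j _ => (intervalIntegral.integral_mul_const _ _).symm
  rw [Finset.sum_congr rfl fun i _ => step1 i,
    ← intervalIntegral.integral_finset_sum]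
  · rfl
  · intro i _
    refine Continuous.intervalIntegrable ?_ _ _
    exact Continuous.mul continuous_const
      (continuous_finset_sum _ fun j _ => (cont_hess_entry hf x u i j).mul continuous_const)

lemma ssc_dot {M : ℝ} (hssc : StronglySelfConcordant f M) (x y z w v : Fin n → ℝ) :
    v ⬝ᵥ (hessF f y).mulVec v - v ⬝ᵥ (hessF f x).mulVec v
      ≤ M * Real.sqrt ((y - x) ⬝ᵥ (hessF f z).mulVec (y - x))
          * (v ⬝ᵥ (hessF f w).mulVec v) := by
  have h := psdLE.le (hssc x y z w) v
  rw [sub_mulVec, dotProduct_sub, qf_smul] at h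
  exact h

lemma sqrt_qf_smul (u : Fin n → ℝ) (H : Matrix (Fin n) (Fin n) ℝ) {c : ℝ} (hc : 0 ≤ c) :
    Real.sqrt ((c • u) ⬝ᵥ H.mulVec (c • u)) = c * Real.sqrt (u ⬝ᵥ H.mulVec u) := by
  rw [smul_dotProduct, mulVec_smul, dotProduct_smul]
  have : c • (c • (u ⬝ᵥ H.mulVec u)) = c^2 * (u ⬝ᵥ H.mulVec u) := by
    simp [smul_eq_mul]; ring
  rw [this, Real.sqrt_mul (sq_nonneg c), Real.sqrt_sq hc]

lemma int_linear (p q : ℝ) : (∫ t in (0:ℝ)..1, (p + q * t)) = p + q / 2 := by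
  rw [intervalIntegral.integral_add (f := fun _ => p) (g := fun t => q * t) intervalIntegrable_const
      ((continuous_const.mul continuous_id').intervalIntegrable _ _)]
  rw [intervalIntegral.integral_const_mul, integral_id]
  norm_num
  ring

end QN

namespace QN
variable {n : ℕ} {f : (Fin n → ℝ) → ℝ}

lemma qf_neg (w : Fin n → ℝ) (H : Matrix (Fin n) (Fin n) ℝ) :
    (-w) ⬝ᵥ H.mulVec (-w) = w ⬝ᵥ H.mulVec w := by
  simp [neg_dotProduct, mulVec_neg, dotProduct_neg]

set_option maxHeartbeats 1000000 in
lemma J_bounds (hf : ContDiff ℝ 2 f) (hpos : ∀ y, (hessF f y).PosDef) {M : ℝ} (hM : 0 ≤ M)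
    (hssc : StronglySelfConcordant f M) (x u : Fin n → ℝ)
    {J : Matrix (Fin n) (Fin n) ℝ}
    (hJ : J = Matrix.of fun i j => ∫ t in (0:ℝ)..1, hessF f (x + t • u) i j)
    {r : ℝ} (hr : r = Real.sqrt (u ⬝ᵥ (hessF f x).mulVec u)) (v : Fin n → ℝ) :
    (v ⬝ᵥ J.mulVec v ≤ (1 + M*r/2) * (v ⬝ᵥ (hessF f x).mulVec v)) ∧
    (Real.exp (-(M*r/2)) * (v ⬝ᵥ (hessF f x).mulVec v) ≤ v ⬝ᵥ J.mulVec v) ∧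
    (v ⬝ᵥ J.mulVec v ≤ (1 + M*r/2) * (v ⬝ᵥ (hessF f (x+u)).mulVec v)) ∧
    (Real.exp (-(M*r/2)) * (v ⬝ᵥ (hessF f (x+u)).mulVec v) ≤ v ⬝ᵥ J.mulVec v) := by
  have hr0 : 0 ≤ r := hr ▸ Real.sqrt_nonneg _
  set q : ℝ → ℝ := fun t => v ⬝ᵥ (hessF f (x + t • u)).mulVec v with hq
  have hqc : Continuous q := cont_qf hf x u v
  have hqnn : ∀ t, 0 ≤ q t := fun t => psd_dot (hpos _).posSemidef v
  have hJq : v ⬝ᵥ J.mulVec v = ∫ t in (0:ℝ)..1, q t := by rw [hJ]; exact qf_J hf x u v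
  set q0 : ℝ := v ⬝ᵥ (hessF f x).mulVec v with hq0
  set q1 : ℝ := v ⬝ᵥ (hessF f (x+u)).mulVec v with hq1
  have hq0nn : 0 ≤ q0 := psd_dot (hpos _).posSemidef v
  have hq1nn : 0 ≤ q1 := psd_dot (hpos _).posSemidef v
  set e : ℝ := Real.exp (-(M*r/2)) with he
  have he0 : 0 < e := Real.exp_pos _
  -- difference vectors
  have hd1 : ∀ t : ℝ, x + t • u - x = t • u := fun t => by abel
  have hd2 : ∀ t : ℝ, x - (x + t • u) = -(t • u) := fun t => by abel
  have hd3 : ∀ t : ℝ, x + t • u - (x + u) = -((1-t) • u) := fun t => by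
    rw [sub_smul, one_smul, neg_sub]; abel
  have hd4 : ∀ t : ℝ, x + u - (x + t • u) = (1-t) • u := fun t => by
    rw [sub_smul, one_smul]; abel
  have hsq : ∀ t : ℝ, 0 ≤ t →
      Real.sqrt ((t • u) ⬝ᵥ (hessF f x).mulVec (t • u)) = t * r := fun t ht => by
    rw [sqrt_qf_smul u _ ht, hr]
  -- pointwise inequalities on [0,1]
  have pt1 : ∀ t ∈ Set.Icc (0:ℝ) 1, q t ≤ q0 + (M*r*q0) * t := by
    intro t ht
    have h := ssc_dot hssc x (x + t • u) x x v
    rw [hd1 t, hsq t ht.1] at h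
    nlinarith [h]
  have pt2 : ∀ t ∈ Set.Icc (0:ℝ) 1, q0 ≤ (1 + M*t*r) * q t := by
    intro t ht
    have h := ssc_dot hssc (x + t • u) x x (x + t • u) v
    rw [hd2 t, qf_neg, hsq t ht.1] at h
    nlinarith [h]
  have pt3 : ∀ t ∈ Set.Icc (0:ℝ) 1, q t ≤ (q1 + M*r*q1) + (-(M*r*q1)) * t := by
    intro t ht
    have h := ssc_dot hssc (x + u) (x + t • u) x (x + u) v
    rw [hd3 t, qf_neg, hsq (1-t) (by linarith [ht.2])] at h
    nlinarith [h]
  have pt4 : ∀ t ∈ Set.Icc (0:ℝ) 1, q1 ≤ (1 + M*(1-t)*r) * q t := by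
    intro t ht
    have h := ssc_dot hssc (x + t • u) (x + u) x (x + t • u) v
    rw [hd4 t, hsq (1-t) (by linarith [ht.2])] at h
    nlinarith [h]
  -- lower pointwise with exponential tangent
  have low1 : ∀ t ∈ Set.Icc (0:ℝ) 1, (e*q0*(1+M*r/2)) + (-(e*q0*M*r)) * t ≤ q t := by
    intro t ht
    have h2 := pt2 t ht
    have hexp1 : (1 + M*t*r) ≤ Real.exp (M*t*r) := by
      have := Real.add_one_le_exp (M*t*r); linarith
    have hstep : q0 ≤ Real.exp (M*t*r) * q t :=
      le_trans h2 (mul_le_mul_of_nonneg_right hexp1 (hqnn t))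
    have hstep2 : Real.exp (-(M*t*r)) * q0 ≤ q t := by
      have := mul_le_mul_of_nonneg_left hstep (Real.exp_pos (-(M*t*r))).le
      rw [← mul_assoc, ← Real.exp_add] at this
      simpa using this
    have htan : e * (1 + M*r/2 - M*t*r) ≤ Real.exp (-(M*t*r)) := by
      have h3 := Real.add_one_le_exp (M*r/2 - M*t*r)
      have h4 := mul_le_mul_of_nonneg_left h3 he0.le
      rw [he, ← Real.exp_add] at h4
      have : -(M*r/2) + (M*r/2 - M*t*r) = -(M*t*r) := by ring
      rw [this] at h4
      calc e * (1 + M*r/2 - M*t*r) = Real.exp (-(M*r/2)) * (M*r/2 - M*t*r + 1) := by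
            rw [he]; ring
        _ ≤ Real.exp (-(M*t*r)) := h4
    have := le_trans (mul_le_mul_of_nonneg_right htan hq0nn) hstep2
    calc (e*q0*(1+M*r/2)) + (-(e*q0*M*r)) * t = e * (1 + M*r/2 - M*t*r) * q0 := by ring
      _ ≤ q t := this
  have low2 : ∀ t ∈ Set.Icc (0:ℝ) 1, (e*q1*(1+M*r/2-M*r)) + (e*q1*M*r) * t ≤ q t := by
    intro t ht
    have h2 := pt4 t ht
    have hexp1 : (1 + M*(1-t)*r) ≤ Real.exp (M*(1-t)*r) := by
      have := Real.add_one_le_exp (M*(1-t)*r); linarith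
    have hstep : q1 ≤ Real.exp (M*(1-t)*r) * q t :=
      le_trans h2 (mul_le_mul_of_nonneg_right hexp1 (hqnn t))
    have hstep2 : Real.exp (-(M*(1-t)*r)) * q1 ≤ q t := by
      have := mul_le_mul_of_nonneg_left hstep (Real.exp_pos (-(M*(1-t)*r))).le
      rw [← mul_assoc, ← Real.exp_add] at this
      simpa using this
    have htan : e * (1 + M*r/2 - M*(1-t)*r) ≤ Real.exp (-(M*(1-t)*r)) := by
      have h3 := Real.add_one_le_exp (M*r/2 - M*(1-t)*r)
      have h4 := mul_le_mul_of_nonneg_left h3 he0.le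
      rw [he, ← Real.exp_add] at h4
      have : -(M*r/2) + (M*r/2 - M*(1-t)*r) = -(M*(1-t)*r) := by ring
      rw [this] at h4
      calc e * (1 + M*r/2 - M*(1-t)*r)
            = Real.exp (-(M*r/2)) * (M*r/2 - M*(1-t)*r + 1) := by rw [he]; ring
        _ ≤ Real.exp (-(M*(1-t)*r)) := h4
    have := le_trans (mul_le_mul_of_nonneg_right htan hq1nn) hstep2
    calc (e*q1*(1+M*r/2-M*r)) + (e*q1*M*r) * t = e * (1 + M*r/2 - M*(1-t)*r) * q1 := by ring
      _ ≤ q t := this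
  -- integrate
  have hint_q : IntervalIntegrable q MeasureTheory.volume 0 1 := hqc.intervalIntegrable _ _
  have hlin : ∀ p' q' : ℝ, IntervalIntegrable (fun t => p' + q' * t) MeasureTheory.volume 0 1 :=
    fun p' q' => (continuous_const.add (continuous_const.mul continuous_id')).intervalIntegrable _ _
  refine ⟨?_, ?_, ?_, ?_⟩
  · rw [hJq]
    calc (∫ t in (0:ℝ)..1, q t) ≤ ∫ t in (0:ℝ)..1, (q0 + (M*r*q0) * t) :=
        intervalIntegral.integral_mono_on (by norm_num) hint_q (hlin _ _) pt1
      _ = q0 + (M*r*q0)/2 := int_linear _ _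
      _ = (1 + M*r/2) * q0 := by ring
  · rw [hJq]
    calc e * q0 = (e*q0*(1+M*r/2)) + (-(e*q0*M*r))/2 := by ring
      _ = ∫ t in (0:ℝ)..1, ((e*q0*(1+M*r/2)) + (-(e*q0*M*r)) * t) := (int_linear _ _).symm
      _ ≤ ∫ t in (0:ℝ)..1, q t :=
        intervalIntegral.integral_mono_on (by norm_num) (hlin _ _) hint_q low1
  · rw [hJq]
    calc (∫ t in (0:ℝ)..1, q t) ≤ ∫ t in (0:ℝ)..1, ((q1 + M*r*q1) + (-(M*r*q1)) * t) :=
        intervalIntegral.integral_mono_on (by norm_num) hint_q (hlin _ _) pt3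
      _ = (q1 + M*r*q1) + (-(M*r*q1))/2 := int_linear _ _
      _ = (1 + M*r/2) * q1 := by ring
  · rw [hJq]
    calc e * q1 = (e*q1*(1+M*r/2-M*r)) + (e*q1*M*r)/2 := by ring
      _ = ∫ t in (0:ℝ)..1, ((e*q1*(1+M*r/2-M*r)) + (e*q1*M*r) * t) := (int_linear _ _).symm
      _ ≤ ∫ t in (0:ℝ)..1, q t :=
        intervalIntegral.integral_mono_on (by norm_num) (hlin _ _) hint_q low2

lemma J_herm (hpos : ∀ y, (hessF f y).PosDef) (x u : Fin n → ℝ) :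
    (Matrix.of fun i j => ∫ t in (0:ℝ)..1, hessF f (x + t • u) i j :
      Matrix (Fin n) (Fin n) ℝ)ᵀ
      = Matrix.of fun i j => ∫ t in (0:ℝ)..1, hessF f (x + t • u) i j := by
  ext i j
  simp only [transpose_apply, Matrix.of_apply]
  congr 1
  funext t
  have h := congrFun (congrFun (herm_transpose (hpos (x + t • u)).1) i) j
  simp only [transpose_apply] at h
  exact h

end QN

namespace QN
variable {n : ℕ}

lemma inv_step {c d X Y Z : ℝ} (hc : 0 < c) (hd : 0 < d) (hX : X ≤ d * Y)
    (hYZ : c⁻¹ * Y ≤ Z) : (c*d)⁻¹ * X ≤ Z := by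
  have h1 : (c*d)⁻¹ * X ≤ (c*d)⁻¹ * (d*Y) := mul_le_mul_of_nonneg_left hX (by positivity)
  have h2 : (c*d)⁻¹ * (d*Y) = c⁻¹ * Y := by field_simp
  linarith

lemma up_step {c d X Y Z : ℝ} (hc : 0 ≤ c) (hZY : Z ≤ c * Y) (hYX : Y ≤ d * X) :
    Z ≤ c * d * X := by
  have h := mul_le_mul_of_nonneg_left hYX hc
  calc Z ≤ c * Y := hZY
    _ ≤ c * (d * X) := h
    _ = c * d * X := by ring

lemma weaken_low {a b X Z : ℝ} (h : a⁻¹ * X ≤ Z) (hab : a ≤ b) (ha : 0 < a) (hX : 0 ≤ X) :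
    b⁻¹ * X ≤ Z :=
  le_trans (mul_le_mul_of_nonneg_right (by
    have hb : 0 < b := lt_of_lt_of_le ha hab
    exact inv_anti₀ ha hab) hX) h

lemma weaken_up {a b X Z : ℝ} (h : Z ≤ a * X) (hab : a ≤ b) (hX : 0 ≤ X) : Z ≤ b * X :=
  le_trans h (mul_le_mul_of_nonneg_right hab hX)

lemma low_flip {e X Y : ℝ} (he : 0 < e) (h : e⁻¹ * X ≤ Y) : X ≤ e * Y := by
  have h2 := mul_le_mul_of_nonneg_left h he.le
  rw [← mul_assoc, mul_inv_cancel₀ he.ne', one_mul] at h2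
  exact h2

end QN


open QN in
set_option maxHeartbeats 2000000 in
theorem gen_scheme_eig_bounds {n : ℕ} (hn : 1 ≤ n)
    (f : (Fin n → ℝ) → ℝ) (hf : ContDiff ℝ 2 f)
    (hpos : ∀ x, (hessF f x).PosDef)
    (B : Matrix (Fin n) (Fin n) ℝ) (hB : B.PosDef)
    (μ L M : ℝ) (hμ : 0 < μ) (hL : 0 < L) (hM : 0 ≤ M)
    (hμB : ∀ x, psdLE (μ • B) (hessF f x)) (hLB : ∀ x, psdLE (hessF f x) (L • B))
    (hssc : StronglySelfConcordant f M)
    (τ : ℕ → ℝ) (hτ : ∀ k, τ k ∈ Set.Icc (0 : ℝ) 1)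
    (x : ℕ → Fin n → ℝ) (G : ℕ → Matrix (Fin n) (Fin n) ℝ)
    (u : ℕ → Fin n → ℝ) (J : ℕ → Matrix (Fin n) (Fin n) ℝ)
    (hG0 : G 0 = L • B)
    (hx : ∀ k, x (k + 1) = x k - (G k)⁻¹.mulVec (gradF f (x k)))
    (hu : ∀ k, u k = x (k + 1) - x k)
    (hJ : ∀ k, J k = Matrix.of fun i j => ∫ t in (0:ℝ)..1, hessF f (x k + t • u k) i j)
    (hGrec : ∀ k, G (k + 1) = broyd (τ k) (J k) (G k) (u k))
    (r : ℕ → ℝ) (hr : ∀ k, r k = Real.sqrt (u k ⬝ᵥ (hessF f (x k)).mulVec (u k)))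
    (ξ : ℕ → ℝ) (hξ : ∀ k, ξ k = Real.exp (M * ∑ i ∈ Finset.range k, r i))
    (lam : ℕ → ℝ)
    (hlam : ∀ k, lam k =
      Real.sqrt (gradF f (x k) ⬝ᵥ (hessF f (x k))⁻¹.mulVec (gradF f (x k))))
    (k : ℕ) :
    (psdLE ((ξ k)⁻¹ • hessF f (x k)) (G k) ∧
      psdLE (G k) ((ξ k * (L / μ)) • hessF f (x k))) ∧
    (psdLE ((ξ (k + 1))⁻¹ • J k) (G k) ∧
      psdLE (G k) ((ξ (k + 1) * (L / μ)) • J k)) := by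

  -- basic facts
  have hr0 : ∀ k, 0 ≤ r k := fun k => (hr k) ▸ Real.sqrt_nonneg _
  have hξ1 : ∀ k, 1 ≤ ξ k := fun k => by
    rw [hξ k, ← Real.exp_zero]
    exact Real.exp_le_exp.2 (mul_nonneg hM (Finset.sum_nonneg fun i _ => hr0 i))
  have hξpos : ∀ k, 0 < ξ k := fun k => lt_of_lt_of_le one_pos (hξ1 k)
  have hLμ0 : 0 < L / μ := div_pos hL hμ
  have hLμ : 1 ≤ L / μ := by
    set i0 : Fin n := ⟨0, hn⟩
    set v : Fin n → ℝ := Pi.single i0 1 with hv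
    have hvne : v ≠ 0 := by
      intro h
      have := congrFun h i0
      simp [hv] at this
    have hb : 0 < v ⬝ᵥ B.mulVec v := pd_dot hB hvne
    have h1 := psdLE.le (hμB (x 0)) v
    have h2 := psdLE.le (hLB (x 0)) v
    rw [qf_smul] at h1 h2
    rw [le_div_iff₀ hμ, one_mul]
    nlinarith [h1, h2]
  have hE1 : ∀ k, 1 ≤ Real.exp (M * r k / 2) := fun k => by
    rw [← Real.exp_zero]
    exact Real.exp_le_exp.2 (div_nonneg (mul_nonneg hM (hr0 k)) (by norm_num))
  have hEpos : ∀ k, 0 < Real.exp (M * r k / 2) := fun k => Real.exp_pos _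
  have hconvE : ∀ k, 1 + M * r k / 2 ≤ Real.exp (M * r k / 2) := fun k => by
    have := Real.add_one_le_exp (M * r k / 2); linarith
  have hξsucc : ∀ k, ξ (k+1) = ξ k * (Real.exp (M * r k / 2) * Real.exp (M * r k / 2)) := by
    intro k
    have h2 : Real.exp (M * r k) = Real.exp (M * r k / 2) * Real.exp (M * r k / 2) := by
      rw [← Real.exp_add]; congr 1; ring
    rw [hξ (k+1), hξ k, Finset.sum_range_succ, mul_add, Real.exp_add, h2]
  have hxsucc : ∀ k, x k + u k = x (k+1) := fun k => by rw [hu k]; abel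
  have hJsym : ∀ k, (J k)ᵀ = J k := fun k => by rw [hJ k]; exact J_herm hpos _ _
  have hJb : ∀ k v, _ := fun k v => J_bounds hf hpos hM hssc (x k) (u k) (hJ k) (hr k) v
  have hJpd : ∀ k, (J k).PosDef := by
    intro k
    refine Matrix.PosDef.of_dotProduct_mulVec_pos (herm_of_transpose (hJsym k)) fun v hv => ?_
    have h1 := (hJb k v).2.1
    have h2 : 0 < Real.exp (-(M * r k / 2)) * (v ⬝ᵥ (hessF f (x k)).mulVec v) :=
      mul_pos (Real.exp_pos _) (pd_dot (hpos _) hv)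
    simpa using lt_of_lt_of_le h2 h1
  -- conversion of the exp-lower bounds
  have hJlowH : ∀ k v, v ⬝ᵥ (hessF f (x k)).mulVec v
      ≤ Real.exp (M * r k / 2) * (v ⬝ᵥ (J k).mulVec v) := by
    intro k v
    have h := (hJb k v).2.1
    rw [Real.exp_neg] at h
    exact low_flip (hEpos k) h
  have hJlowH' : ∀ k v, v ⬝ᵥ (hessF f (x (k+1))).mulVec v
      ≤ Real.exp (M * r k / 2) * (v ⬝ᵥ (J k).mulVec v) := by
    intro k v
    have h := (hJb k v).2.2.2
    rw [hxsucc k, Real.exp_neg] at h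
    exact low_flip (hEpos k) h
  have hJupH : ∀ k v, v ⬝ᵥ (J k).mulVec v
      ≤ Real.exp (M * r k / 2) * (v ⬝ᵥ (hessF f (x k)).mulVec v) := by
    intro k v
    refine le_trans (hJb k v).1 (mul_le_mul_of_nonneg_right (hconvE k) ?_)
    exact psd_dot (hpos _).posSemidef v
  have hJupH' : ∀ k v, v ⬝ᵥ (J k).mulVec v
      ≤ Real.exp (M * r k / 2) * (v ⬝ᵥ (hessF f (x (k+1))).mulVec v) := by
    intro k v
    have h := (hJb k v).2.2.1
    rw [hxsucc k] at h
    refine le_trans h (mul_le_mul_of_nonneg_right (hconvE k) ?_)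
    exact psd_dot (hpos _).posSemidef v
  -- the invariant
  set C : ℕ → Prop := fun k =>
    ((G k)ᵀ = G k)
    ∧ (∀ v, (ξ k)⁻¹ * (v ⬝ᵥ (hessF f (x k)).mulVec v) ≤ v ⬝ᵥ (G k).mulVec v)
    ∧ (∀ v, v ⬝ᵥ (G k).mulVec v ≤ ξ k * (L / μ) * (v ⬝ᵥ (hessF f (x k)).mulVec v))
    with hC
  have half : ∀ k, C k →
      (∀ v, (ξ k * Real.exp (M * r k / 2))⁻¹ * (v ⬝ᵥ (J k).mulVec v)
          ≤ v ⬝ᵥ (G k).mulVec v)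
      ∧ (∀ v, v ⬝ᵥ (G k).mulVec v
          ≤ ξ k * (L / μ) * Real.exp (M * r k / 2) * (v ⬝ᵥ (J k).mulVec v)) := by
    intro k hCk
    constructor
    · intro v
      exact inv_step (hξpos k) (hEpos k) (hJupH k v) (hCk.2.1 v)
    · intro v
      exact up_step (mul_pos (hξpos k) hLμ0).le (hCk.2.2 v) (hJlowH k v)
  have main : ∀ k, C k := by
    intro k
    induction k with
    | zero =>
      have hξ0 : ξ 0 = 1 := by rw [hξ 0]; simp
      refine ⟨?_, ?_, ?_⟩
      · rw [hG0, transpose_smul, herm_transpose hB.1]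
      · intro v
        have h := psdLE.le (hLB (x 0)) v
        rw [hG0, hξ0, inv_one, one_mul]
        exact h
      · intro v
        have h := psdLE.le (hμB (x 0)) v
        rw [qf_smul] at h
        rw [hG0, hξ0, one_mul, qf_smul]
        have h2 := mul_le_mul_of_nonneg_left h hLμ0.le
        have h3 : L / μ * (μ * (v ⬝ᵥ B.mulVec v)) = L * (v ⬝ᵥ B.mulVec v) := by
          field_simp
        linarith
    | succ k ih =>
      obtain ⟨hhalfL, hhalfU⟩ := half k ih
      have hGpd : (G k).PosDef := by
        refine Matrix.PosDef.of_dotProduct_mulVec_pos (herm_of_transpose ih.1) fun v hv => ?_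
        have h1 := ih.2.1 v
        have h2 : 0 < (ξ k)⁻¹ * (v ⬝ᵥ (hessF f (x k)).mulVec v) :=
          mul_pos (inv_pos.2 (hξpos k)) (pd_dot (hpos _) hv)
        simpa using lt_of_lt_of_le h2 h1
      have hξEpos : 0 < ξ k * Real.exp (M * r k / 2) := mul_pos (hξpos k) (hEpos k)
      have hα'pos : 0 < (ξ k * Real.exp (M * r k / 2))⁻¹ := inv_pos.2 hξEpos
      have hξE1 : 1 ≤ ξ k * Real.exp (M * r k / 2) :=
        le_trans (hξ1 k) (le_mul_of_one_le_right (hξpos k).le (hE1 k))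
      have hα'le : (ξ k * Real.exp (M * r k / 2))⁻¹ ≤ 1 := by
        rw [inv_le_one_iff₀]
        right; exact hξE1
      have hβ'ge : 1 ≤ ξ k * (L / μ) * Real.exp (M * r k / 2) := by
        calc (1:ℝ) ≤ ξ k := hξ1 k
          _ ≤ ξ k * (L / μ) := le_mul_of_one_le_right (hξpos k).le hLμ
          _ ≤ ξ k * (L / μ) * Real.exp (M * r k / 2) :=
            le_mul_of_one_le_right (mul_pos (hξpos k) hLμ0).le (hE1 k)
      have hbro := fun v => broyd_qf (hJpd k) hGpd (u k) v (hτ k).1 (hτ k).2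
        hα'pos hα'le hβ'ge hhalfL hhalfU
      refine ⟨?_, ?_, ?_⟩
      · rw [hGrec k]
        exact broyd_transpose (hJpd k).1 hGpd.1 (u k) (τ k)
      · intro v
        have h1 := (hbro v).1
        rw [← hGrec k] at h1
        have h2 := inv_step (c := ξ k * Real.exp (M * r k / 2))
          (d := Real.exp (M * r k / 2)) hξEpos (hEpos k) (hJlowH' k v) h1
        have h3 : ξ (k+1) = ξ k * Real.exp (M * r k / 2) * Real.exp (M * r k / 2) := by
          rw [hξsucc k]; ring
        rw [h3]
        exact h2
      · intro v
        have h1 := (hbro v).2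
        rw [← hGrec k] at h1
        have h2 := up_step (c := ξ k * (L / μ) * Real.exp (M * r k / 2))
          (d := Real.exp (M * r k / 2)) (mul_pos (mul_pos (hξpos k) hLμ0) (hEpos k)).le h1
          (hJupH' k v)
        have h3 : ξ (k+1) * (L / μ)
            = ξ k * (L / μ) * Real.exp (M * r k / 2) * Real.exp (M * r k / 2) := by
          rw [hξsucc k]; ring
        rw [h3]
        exact h2
  -- final packaging
  obtain ⟨hsymk, hlowk, hupk⟩ := main k
  obtain ⟨hhalfL, hhalfU⟩ := half k (main k)
  have hHsym := herm_transpose (hpos (x k)).1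
  have hJq0 : ∀ v, 0 ≤ v ⬝ᵥ (J k).mulVec v := fun v => psd_dot (hJpd k).posSemidef v
  have hξE_le : ξ k * Real.exp (M * r k / 2) ≤ ξ (k+1) := by
    rw [hξsucc k, ← mul_assoc]
    exact le_mul_of_one_le_right (mul_pos (hξpos k) (hEpos k)).le (hE1 k)
  have hξELμ_le : ξ k * (L / μ) * Real.exp (M * r k / 2) ≤ ξ (k+1) * (L / μ) := by
    have : ξ (k+1) * (L / μ)
        = (ξ k * (L / μ) * Real.exp (M * r k / 2)) * Real.exp (M * r k / 2) := by
      rw [hξsucc k]; ring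
    rw [this]
    exact le_mul_of_one_le_right
      (mul_pos (mul_pos (hξpos k) hLμ0) (hEpos k)).le (hE1 k)
  refine ⟨⟨?_, ?_⟩, ?_, ?_⟩
  · refine psdLE_of ?_ ?_
    · rw [transpose_sub, transpose_smul, hsymk, hHsym]
    · intro v
      rw [qf_smul]
      exact hlowk v
  · refine psdLE_of ?_ ?_
    · rw [transpose_sub, transpose_smul, hsymk, hHsym]
    · intro v
      rw [qf_smul]
      exact hupk v
  · refine psdLE_of ?_ ?_
    · rw [transpose_sub, transpose_smul, hsymk, hJsym k]
    · intro v
      rw [qf_smul]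
      exact weaken_low (hhalfL v) hξE_le (mul_pos (hξpos k) (hEpos k)) (hJq0 v)
  · refine psdLE_of ?_ ?_
    · rw [transpose_sub, transpose_smul, hsymk, hJsym k]
    · intro v
      rw [qf_smul]
      exact weaken_up (hhalfU v) hξELμ_le (hJq0 v)
end
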